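/- arXiv:2005.09158 — 5 statements merged into one kernel-verified Lean document; each statement's English description precedes it below -/
import Mathlib

section
/- Let N ≥ 1, α ∈ (0,1], and let c = (c_0,…,c_{N−1})ᵀ ∈ ℂ^N. Let C ∈ ℂ^{N×N} be the α-circulant matrix with first column c. Then V := Γ_α^{-1}𝔽* is invertible and C = V D V^{-1}, where D is the diagonal matrix whose diagonal is the vector √N · 𝔽 Γ_α c. In particular, any two α-circulant matrices of the same size and with the same parameter α are simultaneously diagonalized by the same matrix V = Γ_α^{-1}𝔽*. -/
open Matrix Complex

/-- The discrete Fourier matrix `𝔽` with entries `ω^{jk}/√N`, `ω = e^{2πi/N}` (0-based indices). -/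
noncomputable def fourierMatrix (N : ℕ) : Matrix (Fin N) (Fin N) ℂ :=
  Matrix.of fun j k =>
    Complex.exp (2 * Real.pi * Complex.I * (j : ℕ) * (k : ℕ) / N) / (Real.sqrt N : ℂ)

/-- The diagonal matrix `Γ_α = diag(1, α^{1/N}, …, α^{(N-1)/N})`. -/
noncomputable def gammaMatrix (N : ℕ) (α : ℝ) : Matrix (Fin N) (Fin N) ℂ :=
  Matrix.diagonal fun j => ((α ^ ((j : ℝ) / (N : ℝ)) : ℝ) : ℂ)

/-- The `α`-circulant matrix with first column `c`: entries `c_{j-k}` for `j ≥ k`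
and `α·c_{N+j-k}` for `j < k` (using that `Fin`-subtraction is subtraction mod `N`). -/
noncomputable def alphaCirculant {N : ℕ} (α : ℝ) (c : Fin N → ℂ) :
    Matrix (Fin N) (Fin N) ℂ :=
  Matrix.of fun j k => (if (k : ℕ) ≤ (j : ℕ) then 1 else (α : ℂ)) * c (j - k)

namespace ACaux

/-- The basic character `m ↦ e^{2πi m/N}`. -/
noncomputable def f (N : ℕ) (m : ℤ) : ℂ := Complex.exp (2 * Real.pi * Complex.I * m / N)

lemma f_add (N : ℕ) (a b : ℤ) : f N (a + b) = f N a * f N b := by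
  rw [f, f, f, ← Complex.exp_add]
  congr 1
  push_cast
  ring

lemma f_natmul (N : ℕ) (hN : N ≠ 0) (a : ℤ) : f N ((N : ℤ) * a) = 1 := by
  rw [f]
  have hNc : (N : ℂ) ≠ 0 := Nat.cast_ne_zero.mpr hN
  have h : (2 * (Real.pi : ℂ) * Complex.I * (((N : ℤ) * a : ℤ) : ℂ) / (N : ℂ))
      = (a : ℤ) * (2 * (Real.pi : ℂ) * Complex.I) := by
    push_cast
    field_simp
  rw [h, Complex.exp_int_mul_two_pi_mul_I]

lemma f_pow (N : ℕ) (a : ℤ) (k : ℕ) : f N (a * k) = (f N a) ^ k := by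
  rw [f, f, ← Complex.exp_nat_mul]
  congr 1
  push_cast
  ring

lemma conj_f (N : ℕ) (m : ℤ) : (starRingEnd ℂ) (f N m) = f N (-m) := by
  rw [f, f, ← Complex.exp_conj]
  congr 1
  have h1 : (2 * (Real.pi : ℂ) * Complex.I * (m : ℂ) / (N : ℂ))
      = ((2 * Real.pi * (m : ℝ) / (N : ℝ) : ℝ) : ℂ) * Complex.I := by
    push_cast
    ring
  rw [h1, RingHom.map_mul, Complex.conj_ofReal, Complex.conj_I]
  push_cast
  ring

lemma f_eq_one_iff (N : ℕ) (hN : N ≠ 0) (d : ℤ) : f N d = 1 ↔ (N : ℤ) ∣ d := by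
  constructor
  · intro h
    rw [f, Complex.exp_eq_one_iff] at h
    obtain ⟨n, hn⟩ := h
    refine ⟨n, ?_⟩
    have hNc : (N : ℂ) ≠ 0 := Nat.cast_ne_zero.mpr hN
    have hπ : (Real.pi : ℂ) ≠ 0 := Complex.ofReal_ne_zero.mpr Real.pi_ne_zero
    have h2πI : (2 * (Real.pi : ℂ) * Complex.I) ≠ 0 := by
      simp [Real.pi_ne_zero, Complex.I_ne_zero]
    have hd : (d : ℂ) = (N : ℂ) * n := by
      field_simp at hn
      apply mul_left_cancel₀ h2πI
      linear_combination (2 * (Real.pi : ℂ) * Complex.I) * hn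
    exact_mod_cast hd
  · rintro ⟨a, rfl⟩
    exact f_natmul N hN a

lemma orth (N : ℕ) (hN : N ≠ 0) (d : ℤ) :
    ∑ k : Fin N, f N (d * (k : ℕ)) = if (N : ℤ) ∣ d then (N : ℂ) else 0 := by
  have h : ∀ k : Fin N, f N (d * (k : ℕ)) = (f N d) ^ (k : ℕ) := fun k => f_pow N d k
  simp_rw [h]
  rw [Fin.sum_univ_eq_sum_range (fun k => (f N d) ^ k) N]
  split_ifs with hdvd
  · have h1 : f N d = 1 := (f_eq_one_iff N hN d).mpr hdvd
    simp only [h1, one_pow, Finset.sum_const, Finset.card_range, nsmul_eq_mul, mul_one]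
  · have hne : f N d ≠ 1 := fun h1 => hdvd ((f_eq_one_iff N hN d).mp h1)
    rw [geom_sum_eq hne]
    have : (f N d) ^ N = 1 := by
      rw [← f_pow, mul_comm]
      exact f_natmul N hN d
    simp [this]

lemma fourier_apply (N : ℕ) (j k : Fin N) :
    fourierMatrix N j k = f N ((j : ℕ) * (k : ℕ)) / (Real.sqrt N : ℂ) := by
  rw [fourierMatrix, Matrix.of_apply, f]
  congr 2
  push_cast
  ring

lemma fourier_mul_conjTranspose (N : ℕ) (hN : N ≠ 0) :
    fourierMatrix N * (fourierMatrix N)ᴴ = 1 := by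
  ext j l
  rw [Matrix.mul_apply]
  have hsqrt : (Real.sqrt N : ℂ) * (Real.sqrt N : ℂ) = (N : ℂ) := by
    rw [← Complex.ofReal_mul, Real.mul_self_sqrt (Nat.cast_nonneg N)]
    norm_cast
  have hsN : (Real.sqrt N : ℂ) ≠ 0 := by
    rw [Complex.ofReal_ne_zero]
    exact Real.sqrt_ne_zero'.mpr (by positivity)
  have key : ∀ k : Fin N, fourierMatrix N j k * (fourierMatrix N)ᴴ k l
      = f N (((j : ℕ) - (l : ℕ) : ℤ) * (k : ℕ)) / (N : ℂ) := by
    intro k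
    rw [Matrix.conjTranspose_apply, fourier_apply, fourier_apply, Complex.star_def,
      map_div₀, conj_f, Complex.conj_ofReal]
    rw [div_mul_div_comm, hsqrt, ← f_add]
    congr 2
    push_cast
    ring
  simp_rw [key]
  rw [← Finset.sum_div, orth N hN]
  have hNc : (N : ℂ) ≠ 0 := Nat.cast_ne_zero.mpr hN
  by_cases h : j = l
  · subst h
    have : ((j : ℕ) : ℤ) - ((j : ℕ) : ℤ) = 0 := by ring
    simp only [this, dvd_zero, if_true, Matrix.one_apply_eq, sub_self]
    exact div_self hNc
  · have hdvd : ¬ ((N : ℤ) ∣ ((j : ℕ) - (l : ℕ) : ℤ)) := by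
      intro hd
      have h0 : ((j : ℕ) : ℤ) - ((l : ℕ) : ℤ) = 0 := by
        refine Int.eq_zero_of_abs_lt_dvd hd ?_
        have := j.isLt
        have := l.isLt
        rw [abs_lt]
        omega
      apply h
      have : (j : ℕ) = (l : ℕ) := by omega
      exact Fin.ext this
    simp [hdvd, Matrix.one_apply, h]

lemma gamma_inv (N : ℕ) (α : ℝ) (hα0 : 0 < α) :
    (gammaMatrix N α)⁻¹
      = Matrix.diagonal (fun j : Fin N => (((α ^ ((j : ℝ) / (N : ℝ)) : ℝ))⁻¹ : ℂ)) := by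
  apply Matrix.inv_eq_right_inv
  rw [gammaMatrix, Matrix.diagonal_mul_diagonal]
  have h : (fun j : Fin N => ((α ^ ((j : ℝ) / (N : ℝ)) : ℝ) : ℂ)
        * (((α ^ ((j : ℝ) / (N : ℝ)) : ℝ))⁻¹ : ℂ)) = fun _ => (1 : ℂ) := by
    funext j
    rw [← Complex.ofReal_inv, ← Complex.ofReal_mul,
      mul_inv_cancel₀ (Real.rpow_pos_of_pos hα0 _).ne']
    simp
  rw [h, Matrix.diagonal_one]

lemma scalar_neg (a cc gm' gj' g f1 f2 s : ℂ) (ha : a ≠ 0) (hs : s ≠ 0)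
    (h : gm' = gj' * g * a⁻¹) :
    a * cc * gm' * (f1 * f2 / s) = gj' * (f1 / s) * (s * (f2 / s * (g * cc))) := by
  subst h
  field_simp

end ACaux

set_option maxHeartbeats 1000000 in
open ACaux in
/-- Diagonalization of α-circulant matrices: `C = V D V⁻¹` with `V = Γ_α⁻¹ 𝔽*` and
`D = diag(√N · 𝔽 Γ_α c)`. -/
theorem alphaCirculant_diagonalization (N : ℕ) (hN : 1 ≤ N) (α : ℝ)
    (hα : α ∈ Set.Ioc (0 : ℝ) 1) (c : Fin N → ℂ) :
    IsUnit ((gammaMatrix N α)⁻¹ * (fourierMatrix N)ᴴ) ∧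
    alphaCirculant α c =
      ((gammaMatrix N α)⁻¹ * (fourierMatrix N)ᴴ) *
        Matrix.diagonal (fun j =>
          (Real.sqrt N : ℂ) * (fourierMatrix N).mulVec ((gammaMatrix N α).mulVec c) j) *
        ((gammaMatrix N α)⁻¹ * (fourierMatrix N)ᴴ)⁻¹ := by
  obtain ⟨hα0, hα1⟩ := hα
  haveI : NeZero N := ⟨by omega⟩
  have hNne : N ≠ 0 := by omega
  have hNR : (0:ℝ) < N := by positivity
  have hFU : fourierMatrix N * (fourierMatrix N)ᴴ = 1 := fourier_mul_conjTranspose N hNne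
  have hFHunit : IsUnit (fourierMatrix N)ᴴ :=
    (Matrix.isUnit_iff_isUnit_det _).mpr (Matrix.isUnit_det_of_right_inverse (mul_eq_one_comm.mp hFU))
  have hGunit : IsUnit (gammaMatrix N α)⁻¹ := by
    rw [gamma_inv N α hα0, Matrix.isUnit_iff_isUnit_det, Matrix.det_diagonal]
    refine isUnit_iff_ne_zero.mpr (Finset.prod_ne_zero_iff.mpr fun j _ => ?_)
    rw [← Complex.ofReal_inv, Complex.ofReal_ne_zero]
    exact inv_ne_zero (Real.rpow_pos_of_pos hα0 _).ne'
  have hVunit : IsUnit ((gammaMatrix N α)⁻¹ * (fourierMatrix N)ᴴ) := hGunit.mul hFHunit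
  refine ⟨hVunit, ?_⟩
  set D : Matrix (Fin N) (Fin N) ℂ := Matrix.diagonal (fun j =>
      (Real.sqrt N : ℂ) * (fourierMatrix N).mulVec ((gammaMatrix N α).mulVec c) j) with hD
  set V : Matrix (Fin N) (Fin N) ℂ := (gammaMatrix N α)⁻¹ * (fourierMatrix N)ᴴ with hV
  have hsN : (Real.sqrt N : ℂ) ≠ 0 := by
    rw [Complex.ofReal_ne_zero]
    exact (Real.sqrt_pos.mpr hNR).ne'
  have key : alphaCirculant α c * V = V * D := by
    rw [hV, gamma_inv N α hα0]
    ext j l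
    rw [← Matrix.mul_assoc, Matrix.mul_diagonal, Matrix.mul_apply]
    simp only [Matrix.mul_diagonal, Matrix.diagonal_mul, hD,
      Matrix.conjTranspose_apply, Matrix.mulVec, dotProduct, Matrix.mulVec_diagonal,
      gammaMatrix, alphaCirculant, Matrix.of_apply, ACaux.fourier_apply, Complex.star_def,
      map_div₀, conj_f, Complex.conj_ofReal, Matrix.diagonal_apply, ite_mul, zero_mul,
      Finset.sum_ite_eq, Finset.mem_univ, if_true]
    conv_rhs => rw [Finset.mul_sum, Finset.mul_sum]
    apply Fintype.sum_equiv (Equiv.subLeft j)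
    intro m
    simp only [Equiv.subLeft_apply]
    have hj := j.isLt
    have hml := m.isLt
    have hsub : ((j - m : Fin N) : ℕ)
        = if (m : ℕ) ≤ (j : ℕ) then (j : ℕ) - (m : ℕ) else N + (j : ℕ) - (m : ℕ) := by
      rw [Fin.sub_def]
      split_ifs with h
      · have h1 : (N - (m : ℕ) + (j : ℕ)) = N + ((j : ℕ) - (m : ℕ)) := by omega
        simp only [h1, Nat.add_mod_left, Nat.mod_eq_of_lt (show (j:ℕ) - (m:ℕ) < N by omega)]
      · simp only [Nat.mod_eq_of_lt (show N - (m:ℕ) + (j:ℕ) < N by omega)]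
        omega
    have hαC : (α : ℂ) ≠ 0 := Complex.ofReal_ne_zero.mpr hα0.ne'
    by_cases hm : (m : ℕ) ≤ (j : ℕ)
    · rw [hsub, if_pos hm, if_pos hm]
      have hA : ((α ^ ((((m : ℕ)) : ℝ) / (N : ℝ)))⁻¹ : ℝ)
          = (α ^ ((((j : ℕ)) : ℝ) / (N : ℝ)))⁻¹
            * α ^ (((((j : ℕ) - (m : ℕ) : ℕ)) : ℝ) / (N : ℝ)) := by
        have hc : (((j : ℕ) - (m : ℕ) : ℕ) : ℝ) = ((j : ℕ) : ℝ) - ((m : ℕ) : ℝ) := by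
          push_cast [hm]; ring
        rw [hc, show ((((j:ℕ):ℝ) - ((m:ℕ):ℝ)) / (N:ℝ))
            = ((j:ℕ):ℝ)/(N:ℝ) - ((m:ℕ):ℝ)/(N:ℝ) by ring, Real.rpow_sub hα0]
        have h1 : α ^ (((j:ℕ):ℝ)/(N:ℝ)) ≠ 0 := (Real.rpow_pos_of_pos hα0 _).ne'
        have h2 : α ^ (((m:ℕ):ℝ)/(N:ℝ)) ≠ 0 := (Real.rpow_pos_of_pos hα0 _).ne'
        field_simp
      have hAC : (((α ^ ((((m : ℕ)) : ℝ) / (N : ℝ)) : ℝ) : ℂ))⁻¹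
          = (((α ^ ((((j : ℕ)) : ℝ) / (N : ℝ)) : ℝ) : ℂ))⁻¹
            * ((α ^ (((((j : ℕ) - (m : ℕ) : ℕ)) : ℝ) / (N : ℝ)) : ℝ) : ℂ) := by
        exact_mod_cast congrArg Complex.ofReal hA
      have hB : (-(((l : ℕ) : ℤ) * ((m : ℕ) : ℤ)))
          = (-(((l : ℕ) : ℤ) * ((j : ℕ) : ℤ)))
            + ((l : ℕ) : ℤ) * (((j : ℕ) - (m : ℕ) : ℕ) : ℤ) := by
        push_cast [hm]; ring
      rw [hB, f_add, hAC]
      field_simp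
    · rw [hsub, if_neg hm, if_neg hm]
      have hmN : (m : ℕ) ≤ N + (j : ℕ) := by omega
      have hA : ((α ^ ((((m : ℕ)) : ℝ) / (N : ℝ)))⁻¹ : ℝ)
          = (α ^ ((((j : ℕ)) : ℝ) / (N : ℝ)))⁻¹
            * α ^ ((((N + (j : ℕ) - (m : ℕ) : ℕ)) : ℝ) / (N : ℝ)) * α⁻¹ := by
        have hc : ((N + (j : ℕ) - (m : ℕ) : ℕ) : ℝ)
            = (N : ℝ) + ((j : ℕ) : ℝ) - ((m : ℕ) : ℝ) := by
          push_cast [hmN]; ring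
        rw [hc, show (((N:ℝ) + ((j:ℕ):ℝ) - ((m:ℕ):ℝ)) / (N:ℝ))
            = 1 + (((j:ℕ):ℝ)/(N:ℝ) - ((m:ℕ):ℝ)/(N:ℝ)) by field_simp; ring,
          Real.rpow_add hα0, Real.rpow_one, Real.rpow_sub hα0]
        have h1 : α ^ (((j:ℕ):ℝ)/(N:ℝ)) ≠ 0 := (Real.rpow_pos_of_pos hα0 _).ne'
        have h2 : α ^ (((m:ℕ):ℝ)/(N:ℝ)) ≠ 0 := (Real.rpow_pos_of_pos hα0 _).ne'
        field_simp
      have hAC : (((α ^ ((((m : ℕ)) : ℝ) / (N : ℝ)) : ℝ) : ℂ))⁻¹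
          = (((α ^ ((((j : ℕ)) : ℝ) / (N : ℝ)) : ℝ) : ℂ))⁻¹
            * ((α ^ ((((N + (j : ℕ) - (m : ℕ) : ℕ)) : ℝ) / (N : ℝ)) : ℝ) : ℂ)
            * ((α : ℂ))⁻¹ := by
        exact_mod_cast congrArg Complex.ofReal hA
      have hB : (-(((l : ℕ) : ℤ) * ((m : ℕ) : ℤ)))
          = ((-(((l : ℕ) : ℤ) * ((j : ℕ) : ℤ)))
            + ((l : ℕ) : ℤ) * ((N + (j : ℕ) - (m : ℕ) : ℕ) : ℤ))
            + (N : ℤ) * (-((l : ℕ) : ℤ)) := by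
        push_cast [hmN]; ring
      rw [hB, f_add, f_add, f_natmul N hNne, mul_one]
      exact scalar_neg _ _ _ _ _ _ _ _ hαC hsN hAC
  have hVinv : V * V⁻¹ = 1 :=
    Matrix.mul_nonsing_inv V ((Matrix.isUnit_iff_isUnit_det V).mp hVunit)
  conv_lhs => rw [← Matrix.mul_one (alphaCirculant α c), ← hVinv,
    ← Matrix.mul_assoc, key]
end

section
/- Let N_t ≥ 2. The polynomial q(x) = U_{N_t−1}(x) − i·T_{N_t}(x) ∈ ℂ[x] has exactly N_t pairwise distinct complex roots x_1, …, x_{N_t}. -/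
open Polynomial

open Polynomial.Chebyshev Complex in

lemma U_deg_coeff : ∀ m : ℕ, ((U ℂ m).natDegree ≤ m ∧ (U ℂ m).coeff m = 2^m) ∧
    ((U ℂ (m+1:ℕ)).natDegree ≤ m+1 ∧ (U ℂ (m+1:ℕ)).coeff (m+1) = 2^(m+1)) := by
  intro m
  induction m with
  | zero =>
    refine ⟨⟨?_, ?_⟩, ?_, ?_⟩
    · simp [U_zero]
    · simp [U_zero]
    · norm_num only
      rw [U_one]
      exact (natDegree_mul_le).trans (by simp [natDegree_ofNat])
    · norm_num only
      rw [U_one, coeff_ofNat_mul, coeff_X_one]; norm_num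
  | succ k ih =>
    obtain ⟨⟨h1, h2⟩, h3, h4⟩ := ih
    have key : U ℂ ((k+1:ℕ)+1:ℕ) = 2 * X * U ℂ (k+1:ℕ) - U ℂ (k:ℕ) := by
      have := U_add_two ℂ k
      push_cast at this ⊢
      convert this using 2 <;> ring_nf
    refine ⟨⟨h3, h4⟩, ?_, ?_⟩
    · rw [key]
      refine (natDegree_sub_le _ _).trans (max_le ?_ (h1.trans (by omega)))
      refine (natDegree_mul_le).trans ?_
      have hx : (2*X : ℂ[X]).natDegree ≤ 1 := natDegree_mul_le.trans (by simp [natDegree_ofNat])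
      omega
    · rw [key]
      rw [coeff_sub, coeff_eq_zero_of_natDegree_lt (h1.trans_lt (by omega)), sub_zero]
      have h5 : (2 * X * U ℂ (k+1:ℕ) : ℂ[X]) = 2 * (X * U ℂ (k+1:ℕ)) := by ring
      rw [h5, coeff_ofNat_mul, coeff_X_mul, h4]
      ring

open Polynomial.Chebyshev in
lemma T_deg_coeff (k : ℕ) : (T ℂ (k+1:ℕ)).natDegree ≤ k+1 ∧ (T ℂ (k+1:ℕ)).coeff (k+1) = 2^k := by
  have key : T ℂ ((k+1:ℕ):ℤ) = U ℂ (k+1:ℕ) - X * U ℂ (k:ℕ) := by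
    have := T_eq_U_sub_X_mul_U ℂ (k+1)
    push_cast
    convert this using 3 <;> push_cast <;> ring
  obtain ⟨⟨h1, h2⟩, h3, h4⟩ := U_deg_coeff k
  constructor
  · rw [key]
    refine (natDegree_sub_le _ _).trans (max_le h3 (natDegree_mul_le.trans ?_))
    have : (X : ℂ[X]).natDegree ≤ 1 := natDegree_X_le
    omega
  · rw [key, coeff_sub, h4, coeff_X_mul, h2]
    ring

open Polynomial.Chebyshev in
lemma sinh_lt_aux (n : ℕ) (hn : 2 ≤ n) : Real.sinh (n * Real.arsinh (1/n)) < n := by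
  have hn0 : (0:ℝ) < n := by positivity
  have h1 : Real.arsinh (1/n) < 1/n := by
    rw [← Real.sinh_lt_sinh, Real.sinh_arsinh]
    exact Real.self_lt_sinh_iff.mpr (by positivity)
  have h2 : (n:ℝ) * Real.arsinh (1/n) < 1 := by
    calc (n:ℝ) * Real.arsinh (1/n) < n * (1/n) := by
          exact mul_lt_mul_of_pos_left h1 hn0
      _ = 1 := by field_simp
  have h3 : Real.sinh ((n:ℝ) * Real.arsinh (1/n)) < Real.sinh 1 := Real.sinh_lt_sinh.mpr h2
  have h4 : Real.sinh 1 < 2 := by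
    rw [Real.sinh_eq]
    have := Real.exp_one_lt_d9
    have h5 : 0 < Real.exp (-1) := Real.exp_pos _
    nlinarith
  have : (2:ℝ) ≤ n := by exact_mod_cast hn
  linarith

open Polynomial.Chebyshev in
lemma cos_n_sq_ne (n : ℕ) (hn : 2 ≤ n) (θ : ℂ) (hθ : Complex.cos θ = Complex.I / n) :
    (Complex.cos (n*θ))^2 ≠ -(n:ℂ)^2 := by
  have hn0 : (0:ℝ) < n := by positivity
  set u : ℝ := Real.arsinh (1/n) with hu
  set θ0 : ℂ := (Real.pi/2 : ℝ) - (u:ℂ) * Complex.I with hθ0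
  have hcos0 : Complex.cos θ0 = Complex.I / n := by
    rw [hθ0, Complex.cos_sub]
    rw [Complex.cos_mul_I, Complex.sin_mul_I]
    have c1 : Complex.cos ((Real.pi/2 : ℝ) : ℂ) = 0 := by
      rw [← Complex.ofReal_cos]; simp [Real.cos_pi_div_two]
    have s1 : Complex.sin ((Real.pi/2 : ℝ) : ℂ) = 1 := by
      rw [← Complex.ofReal_sin]; simp [Real.sin_pi_div_two]
    rw [c1, s1, ← Complex.ofReal_sinh, hu, Real.sinh_arsinh]
    push_cast
    field_simp
    simp
  have hcc : Complex.cos θ = Complex.cos θ0 := by rw [hθ, hcos0]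
  have hCn : Complex.cos (n*θ) = Complex.cos (n*θ0) := by
    rw [Complex.cos_eq_cos_iff] at hcc
    obtain ⟨k, hk | hk⟩ := hcc
    · rw [hk]
      rw [mul_add]
      have : (n:ℂ) * (2 * k * Real.pi) = (n*k : ℤ) * (2 * Real.pi) := by push_cast; ring
      rw [this, add_comm, Complex.cos_add_int_mul_two_pi]
    · rw [hk]
      rw [mul_sub]
      have : (n:ℂ) * (2 * k * Real.pi) - n*θ = -(n*θ) + (n*k : ℤ) * (2 * Real.pi) := by
        push_cast; ring
      rw [this, Complex.cos_add_int_mul_two_pi, Complex.cos_neg]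
  rw [hCn]
  have hnθ0 : (n:ℂ)*θ0 = ((n*(Real.pi/2) : ℝ) : ℂ) - ((n*u : ℝ) : ℂ) * Complex.I := by
    rw [hθ0]; push_cast; ring
  set A : ℝ := Real.cos (n*(Real.pi/2)) with hA
  set B : ℝ := Real.sin (n*(Real.pi/2)) with hB
  set ch : ℝ := Real.cosh (n*u) with hch
  set sh : ℝ := Real.sinh (n*u) with hsh
  have hC0 : Complex.cos ((n:ℂ)*θ0) = ((A*ch : ℝ) : ℂ) + ((B*sh : ℝ) : ℂ) * Complex.I := by
    rw [hnθ0, Complex.cos_sub, Complex.cos_mul_I, Complex.sin_mul_I,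
      ← Complex.ofReal_cos, ← Complex.ofReal_sin, ← Complex.ofReal_cosh, ← Complex.ofReal_sinh,
      Complex.ofReal_mul, Complex.ofReal_mul]
    ring
  rw [hC0]
  intro h
  have hre := congrArg Complex.re h
  have him := congrArg Complex.im h
  simp [pow_two, Complex.add_re, Complex.add_im, Complex.mul_re, Complex.mul_im] at hre him
  -- hre : (A*ch)^2 - (B*sh)^2 = -(n^2), him : A*ch*(B*sh) = 0 (some form)
  clear_value A B ch sh
  clear h hC0 hCn hcc hcos0 hnθ0 hθ
  have hch0 : 0 < ch := by rw [hch]; exact Real.cosh_pos _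
  have hAB : A^2 + B^2 = 1 := by rw [hA, hB]; exact Real.cos_sq_add_sin_sq _
  have hshlt : sh < n := by rw [hsh, hu]; exact sinh_lt_aux n hn
  have hu0 : 0 ≤ u := by rw [hu]; exact Real.arsinh_nonneg_iff.mpr (by positivity)
  have hsh0 : 0 ≤ sh := by
    rw [hsh, ← Real.sinh_zero]
    exact Real.sinh_le_sinh.mpr (mul_nonneg hn0.le hu0)
  rcases mul_eq_zero.mp (by nlinarith [him] : (A*ch)*(B*sh) = 0) with h1 | h1
  · have hA0 : A = 0 := by
      rcases mul_eq_zero.mp h1 with h | h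
      · exact h
      · exact absurd h hch0.ne'
    have hB2 : B^2 = 1 := by nlinarith
    have hsh2 : sh*sh = (n:ℝ)*(n:ℝ) := by nlinarith [hre, hB2, hA0]
    nlinarith [hsh2, hshlt, hsh0, hn0]
  · have h2 : (A*ch)*(A*ch) = -((n:ℝ)*(n:ℝ)) := by
      rw [← hre, h1]; ring
    nlinarith [mul_self_nonneg (A*ch), hn0]

open Polynomial.Chebyshev in
lemma no_common_root (n : ℕ) (hn : 2 ≤ n) (z : ℂ)
    (hq : (U ℂ ((n:ℤ)-1) - C Complex.I * T ℂ (n:ℤ)).eval z = 0)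
    (hq' : ((derivative (U ℂ ((n:ℤ)-1) - C Complex.I * T ℂ (n:ℤ)))).eval z = 0) : False := by
  have hn0 : (n:ℂ) ≠ 0 := Nat.cast_ne_zero.mpr (by omega)
  obtain ⟨θ, hθ⟩ := Complex.cos_surjective z
  subst hθ
  set c := Complex.cos θ with hc
  set s := Complex.sin θ with hs
  set Cn := Complex.cos ((n:ℂ)*θ) with hCn
  set Sn := Complex.sin ((n:ℂ)*θ) with hSn
  set u0 := (U ℂ ((n:ℤ)-1)).eval c with hu0
  set u1 := (derivative (U ℂ ((n:ℤ)-1))).eval c with hu1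
  have hT : (T ℂ (n:ℤ)).eval c = Cn := by
    rw [hc, T_complex_cos, hCn]; push_cast; ring_nf
  have hU : u0 * s = Sn := by
    rw [hu0, hc, hs, U_complex_cos, hSn]; push_cast; ring_nf
  have hE1 : u0 = Complex.I * Cn := by
    have h := hq
    rw [eval_sub, eval_mul, eval_C, hT] at h
    linear_combination h
  -- derivative equation
  have hder : derivative (U ℂ ((n:ℤ)-1) - C Complex.I * T ℂ (n:ℤ)) =
      derivative (U ℂ ((n:ℤ)-1)) - C Complex.I * (((n:ℤ) : ℂ[X]) * U ℂ ((n:ℤ)-1)) := by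
    rw [derivative_sub, derivative_C_mul, T_derivative_eq_U]
  have hE3 : u1 = Complex.I * n * u0 := by
    have h := hq'
    rw [hder, eval_sub, eval_mul, eval_mul, eval_C, eval_intCast] at h
    push_cast at h
    linear_combination h
  have hODE : (n:ℂ) * Cn = c * u0 - (1 - c^2) * u1 := by
    have h := add_one_mul_T_eq_poly_in_U (R := ℂ) ((n:ℤ)-1)
    have h2 := congrArg (eval c) h
    simp only [eval_mul, eval_sub, eval_add, eval_one, eval_X, eval_pow, eval_intCast] at h2
    rw [sub_add_cancel] at h2
    rw [hT] at h2
    push_cast at h2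
    linear_combination h2
  have hpy1 : s^2 + c^2 = 1 := Complex.sin_sq_add_cos_sq θ
  have hpy2 : Sn^2 + Cn^2 = 1 := Complex.sin_sq_add_cos_sq _
  have hCc : Cn^2 * c^2 = 1 := by
    have hSn2 : Sn = Complex.I * Cn * s := by rw [← hU, hE1]
    rw [hSn2] at hpy2
    linear_combination hpy2 - Cn^2*s^2*Complex.I_sq + Cn^2*hpy1
  have hfact : (Cn * c) * ((n:ℂ) * c - Complex.I) = 0 := by
    linear_combination hODE - (1-c^2)*hE3 + (c - (1-c^2)*Complex.I*(n:ℂ))*hE1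
      - (1-c^2)*(n:ℂ)*Cn*Complex.I_sq
  have hCnc : Cn * c ≠ 0 := by
    intro h
    rw [show Cn^2*c^2 = (Cn*c)^2 by ring, h] at hCc
    simp at hCc
  have hc2 : c = Complex.I / n := by
    have h := (mul_eq_zero.mp hfact).resolve_left hCnc
    field_simp
    linear_combination h
  have hCnsq : Cn^2 = -(n:ℂ)^2 := by
    rw [hc2] at hCc
    field_simp at hCc
    linear_combination -hCc + Cn^2 * Complex.I_sq
  exact cos_n_sq_ne n hn θ hc2 hCnsq

open Polynomial.Chebyshev in
/-- The polynomial `q(x) = U_{N_t-1}(x) - i·T_{N_t}(x)`, where `T` and `U` are the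
Chebyshev polynomials of the first and second kind, has exactly `N_t` pairwise
distinct complex roots. -/
theorem chebyshev_hybrid_poly_distinct_roots (Nt : ℕ) (hNt : 2 ≤ Nt) :
    let q : Polynomial ℂ :=
      Polynomial.Chebyshev.U ℂ ((Nt : ℤ) - 1) -
        Polynomial.C Complex.I * Polynomial.Chebyshev.T ℂ (Nt : ℤ)
    q ≠ 0 ∧ q.roots.toFinset.card = Nt := by
  intro q
  obtain ⟨k, rfl⟩ : ∃ k, Nt = k + 2 := ⟨Nt - 2, by omega⟩
  set n : ℕ := k + 2 with hn
  have hcast1 : ((n:ℤ) - 1) = ((k+1 : ℕ) : ℤ) := by omega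
  have hcast2 : ((n:ℤ)) = ((k+2 : ℕ) : ℤ) := by omega
  -- coeff n of q
  have hUdeg : (U ℂ ((n:ℤ)-1)).natDegree ≤ k+1 := by rw [hcast1]; exact (U_deg_coeff k).2.1
  have hTco : (T ℂ (n:ℤ)).coeff n = 2^(k+1) := by rw [hcast2]; exact (T_deg_coeff (k+1)).2
  have hTdeg : (T ℂ (n:ℤ)).natDegree ≤ n := by rw [hcast2]; exact (T_deg_coeff (k+1)).1
  have hqco : q.coeff n = -(Complex.I * 2^(k+1)) := by
    rw [show q = U ℂ ((n:ℤ)-1) - C Complex.I * T ℂ (n:ℤ) from rfl, coeff_sub,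
      coeff_C_mul, hTco, coeff_eq_zero_of_natDegree_lt (hUdeg.trans_lt (by omega))]
    ring
  have hqco0 : q.coeff n ≠ 0 := by
    rw [hqco]
    simp [Complex.I_ne_zero]
  have hq0 : q ≠ 0 := fun h => hqco0 (by simp [h])
  have hqdegle : q.natDegree ≤ n :=
    (natDegree_sub_le _ _).trans (max_le (hUdeg.trans (by omega))
      ((natDegree_C_mul_le _ _).trans hTdeg))
  have hqdeg : q.natDegree = n := le_antisymm hqdegle (le_natDegree_of_ne_zero hqco0)
  refine ⟨hq0, ?_⟩
  have hsep : q.Separable := by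
    rw [Polynomial.separable_def, Polynomial.isCoprime_iff_aeval_ne_zero_of_isAlgClosed ℂ ℂ]
    intro a
    by_contra h
    push_neg at h
    obtain ⟨h1, h2⟩ := h
    simp only [Polynomial.coe_aeval_eq_eval] at h1 h2
    exact no_common_root n (by omega) a h1 h2
  have hnodup := (Polynomial.nodup_roots hsep)
  rw [Multiset.toFinset_card_of_nodup hnodup]
  rw [(Polynomial.splits_iff_card_roots).mp (IsAlgClosed.splits q), hqdeg]
end

section
/- Let A ∈ ℂ^{N_x×N_x} be diagonalizable and suppose every eigenvalue λ of A satisfies Re(λ) ≥ 0. Let Δt > 0, N_t ≥ 2 and α ∈ (0,1). Define the Trapezoidal-rule all-at-once matrix 𝐀 = (1/Δt)(I − S) ⊗ I_x + (1/2)(I + S) ⊗ A and its α-circulant approximation P_α = (1/Δt)(I − S_α) ⊗ I_x + (1/2)(I + S_α) ⊗ A. Then P_α is invertible and the spectral radius of the iteration matrix I − P_α^{-1}𝐀 satisfies ρ(I − P_α^{-1}𝐀) ≤ α/(1−α). -/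
open Matrix
open scoped Kronecker

/-- The down-shift matrix `S` (entries `S_{j+1,j} = 1`, 0-based: `S j k = 1` iff `j = k+1`). -/
noncomputable def downShift (N : ℕ) : Matrix (Fin N) (Fin N) ℂ :=
  Matrix.of fun j k : Fin N => if (j : ℕ) = (k : ℕ) + 1 then (1 : ℂ) else 0

/-- The α-shift matrix `S_α = S + α E_{1,N}`, where `E_{1,N}` has a single `1` in the
top-right corner. -/
noncomputable def downShiftAlpha (N : ℕ) (α : ℂ) : Matrix (Fin N) (Fin N) ℂ :=
  downShift N +
    α • Matrix.of fun j k : Fin N => if (j : ℕ) = 0 ∧ (k : ℕ) + 1 = N then (1 : ℂ) else 0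


noncomputable def cornerE (N : ℕ) : Matrix (Fin N) (Fin N) ℂ :=
  Matrix.of fun j k : Fin N => if (j : ℕ) = 0 ∧ (k : ℕ) + 1 = N then (1 : ℂ) else 0

lemma downShiftAlpha_eq (N : ℕ) (α : ℂ) :
    downShiftAlpha N α = downShift N + α • cornerE N := rfl

lemma downShiftAlpha_apply (N : ℕ) (α : ℂ) (j k : Fin N) :
    downShiftAlpha N α j k =
      (if (j : ℕ) = (k : ℕ) + 1 then (1 : ℂ) else 0) +
      (if (j : ℕ) = 0 ∧ (k : ℕ) + 1 = N then α else 0) := by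
  simp [downShiftAlpha, downShift, Matrix.add_apply, mul_ite]

lemma sa_pow_apply (N : ℕ) (α : ℂ) (m : ℕ) (hm : m ≤ N) (i l : Fin N) :
    ((downShiftAlpha N α) ^ m) i l =
      if (i : ℕ) = (l : ℕ) + m then 1
      else if (i : ℕ) + N = (l : ℕ) + m then α else 0 := by
  induction m generalizing l with
  | zero =>
      have hl : (l : ℕ) < N := l.2
      simp only [pow_zero, Matrix.one_apply, Nat.add_zero]
      rcases eq_or_ne i l with h | h
      · simp [h]
      · have : (i : ℕ) ≠ (l : ℕ) := fun hc => h (Fin.ext hc)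
        have h2 : (i : ℕ) + N ≠ (l : ℕ) := by omega
        simp [h, this, h2]
  | succ m ih =>
      have hmN : m ≤ N := Nat.le_of_succ_le hm
      have hN : 0 < N := lt_of_lt_of_le (Nat.succ_pos m) hm
      rw [pow_succ, Matrix.mul_apply]
      have : ∀ r : Fin N, ((downShiftAlpha N α) ^ m) i r * downShiftAlpha N α r l =
          ((downShiftAlpha N α) ^ m) i r * (if (r : ℕ) = (l : ℕ) + 1 then (1:ℂ) else 0)
          + ((downShiftAlpha N α) ^ m) i r * (if (r : ℕ) = 0 ∧ (l : ℕ) + 1 = N then α else 0) := by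
        intro r; rw [downShiftAlpha_apply, mul_add]
      rw [Finset.sum_congr rfl (fun r _ => this r), Finset.sum_add_distrib]
      have e1 : (∑ r : Fin N, ((downShiftAlpha N α) ^ m) i r *
          (if (r : ℕ) = (l : ℕ) + 1 then (1:ℂ) else 0)) =
          if h : (l : ℕ) + 1 < N then ((downShiftAlpha N α) ^ m) i ⟨(l : ℕ) + 1, h⟩ else 0 := by
        split_ifs with h
        · rw [Finset.sum_eq_single (⟨(l : ℕ) + 1, h⟩ : Fin N)]
          · simp
          · intro r _ hr
            have : (r : ℕ) ≠ (l : ℕ) + 1 := by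
              intro hc; exact hr (Fin.ext hc)
            simp [this]
          · simp
        · apply Finset.sum_eq_zero; intro r _
          have : (r : ℕ) ≠ (l : ℕ) + 1 := by have := r.2; omega
          simp [this]
      have e2 : (∑ r : Fin N, ((downShiftAlpha N α) ^ m) i r *
          (if (r : ℕ) = 0 ∧ (l : ℕ) + 1 = N then α else 0)) =
          if (l : ℕ) + 1 = N then ((downShiftAlpha N α) ^ m) i ⟨0, hN⟩ * α else 0 := by
        split_ifs with h
        · rw [Finset.sum_eq_single (⟨0, hN⟩ : Fin N)]
          · simp [h]
          · intro r _ hr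
            have : ¬((r : ℕ) = 0 ∧ (l : ℕ) + 1 = N) := by
              intro ⟨hc, _⟩; exact hr (Fin.ext hc)
            simp [this]
          · simp
        · apply Finset.sum_eq_zero; intro r _; simp [h]
      rw [e1, e2]
      by_cases h : (l : ℕ) + 1 < N
      · have h2 : ¬((l : ℕ) + 1 = N) := by omega
        rw [dif_pos h, if_neg h2, ih hmN _, add_zero]
        have hi : (i : ℕ) < N := i.2
        simp only [Fin.val_mk]
        split_ifs <;> first | rfl | (exfalso; omega)
      · have hl : (l : ℕ) < N := l.2
        have h2 : (l : ℕ) + 1 = N := by omega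
        rw [dif_neg h, if_pos h2, ih hmN _, zero_add]
        have hi : (i : ℕ) < N := i.2
        have hmN' : m < N := lt_of_lt_of_le (Nat.lt_succ_self m) hm
        simp only [Fin.val_mk, Nat.zero_add]
        have c0 : ¬((i:ℕ) = (l:ℕ) + (m+1)) := by omega
        have c1 : ¬((i:ℕ) + N = m) := by omega
        rw [if_neg c0, if_neg c1]
        by_cases hi1 : (i:ℕ) = m
        · have : (i:ℕ) + N = (l:ℕ) + (m+1) := by omega
          rw [if_pos hi1, if_pos this, one_mul]
        · have : ¬((i:ℕ) + N = (l:ℕ) + (m+1)) := by omega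
          rw [if_neg hi1, if_neg this, zero_mul]

section Helpers

variable {n o : ℕ}

lemma spectrum_triu (M : Matrix (Fin n) (Fin n) ℂ)
    (h : ∀ i j : Fin n, j < i → M i j = 0) {z : ℂ} (hz : z ∈ spectrum ℂ M) :
    ∃ i, z = M i i := by
  by_contra hc
  push_neg at hc
  rw [spectrum.mem_iff] at hz
  apply hz
  rw [Matrix.isUnit_iff_isUnit_det]
  have htri : (algebraMap ℂ (Matrix (Fin n) (Fin n) ℂ) z - M).BlockTriangular id := by
    intro i j hij
    have hij' : (j : Fin n) < i := hij
    have : ¬ (i = j) := by intro hc2; subst hc2; exact lt_irrefl _ hij'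
    simp [Matrix.sub_apply, Matrix.algebraMap_matrix_apply, this, h i j hij']
  rw [Matrix.det_of_upperTriangular htri]
  refine (Finset.prod_ne_zero_iff.mpr ?_).isUnit
  intro i _
  have : (algebraMap ℂ (Matrix (Fin n) (Fin n) ℂ) z - M) i i = z - M i i := by
    simp [Matrix.sub_apply, Matrix.algebraMap_matrix_apply]
  rw [this]
  exact sub_ne_zero_of_ne (hc i)

lemma blockDiagonal_isUnit (T : Fin o → Matrix (Fin n) (Fin n) ℂ)
    (h : ∀ j, IsUnit (T j)) :
    IsUnit (blockDiagonal T) ∧ (blockDiagonal T)⁻¹ = blockDiagonal (fun j => (T j)⁻¹) := by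
  have h1 : blockDiagonal T * blockDiagonal (fun j => (T j)⁻¹) = 1 := by
    rw [← Matrix.blockDiagonal_mul]
    have : (fun k => T k * (T k)⁻¹) = (1 : Fin o → Matrix (Fin n) (Fin n) ℂ) := by
      funext j
      exact Matrix.mul_nonsing_inv _ ((Matrix.isUnit_iff_isUnit_det _).mp (h j))
    rw [this, Matrix.blockDiagonal_one]
  have h2 : blockDiagonal (fun j => (T j)⁻¹) * blockDiagonal T = 1 := by
    rw [← Matrix.blockDiagonal_mul]
    have : (fun k => (T k)⁻¹ * T k) = (1 : Fin o → Matrix (Fin n) (Fin n) ℂ) := by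
      funext j
      exact Matrix.nonsing_inv_mul _ ((Matrix.isUnit_iff_isUnit_det _).mp (h j))
    rw [this, Matrix.blockDiagonal_one]
  exact ⟨isUnit_iff_exists.mpr ⟨_, h1, h2⟩, Matrix.inv_eq_right_inv h1⟩

lemma spectrum_blockDiagonal_subset (T : Fin o → Matrix (Fin n) (Fin n) ℂ) {z : ℂ}
    (hz : z ∈ spectrum ℂ (blockDiagonal T)) : ∃ j, z ∈ spectrum ℂ (T j) := by
  by_contra hc
  push_neg at hc
  rw [spectrum.mem_iff] at hz
  apply hz
  have h1 : algebraMap ℂ (Matrix (Fin n × Fin o) (Fin n × Fin o) ℂ) z - blockDiagonal T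
      = blockDiagonal (fun j => algebraMap ℂ (Matrix (Fin n) (Fin n) ℂ) z - T j) := by
    ext ⟨i, j⟩ ⟨k, l⟩
    simp only [Matrix.sub_apply, Matrix.blockDiagonal_apply, Matrix.algebraMap_matrix_apply,
      Prod.mk.injEq]
    by_cases hjl : j = l
    · subst hjl
      by_cases hik : i = k <;> simp [hik]
    · simp [hjl]
  rw [h1]
  exact (blockDiagonal_isUnit _ (fun j => spectrum.notMem_iff.mp (hc j))).1

lemma spectrum_conj_mem {m : Type*} [Fintype m] [DecidableEq m] {Q Q' X : Matrix m m ℂ}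
    (h1 : Q * Q' = 1) (h2 : Q' * Q = 1) {z : ℂ}
    (hz : z ∈ spectrum ℂ (Q' * X * Q)) : z ∈ spectrum ℂ X := by
  rw [spectrum.mem_iff] at hz ⊢
  intro hX
  apply hz
  have hQ : IsUnit Q := by
    rw [Matrix.isUnit_iff_isUnit_det]
    exact IsUnit.of_mul_eq_one _ (by rw [← Matrix.det_mul, h1, Matrix.det_one])
  have hQ' : IsUnit Q' := by
    rw [Matrix.isUnit_iff_isUnit_det]
    exact IsUnit.of_mul_eq_one _ (by rw [← Matrix.det_mul, h2, Matrix.det_one])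
  have key : algebraMap ℂ (Matrix m m ℂ) z - Q' * X * Q
      = Q' * (algebraMap ℂ (Matrix m m ℂ) z - X) * Q := by
    rw [Matrix.mul_sub, Matrix.sub_mul]
    congr 1
    rw [Algebra.algebraMap_eq_smul_one, Matrix.mul_smul, Matrix.mul_one, Matrix.smul_mul, h2]
  rw [key]
  exact (hQ'.mul hX).mul hQ

lemma kron_diag {m' n' : ℕ} (X : Matrix (Fin m') (Fin m') ℂ) (d : Fin n' → ℂ) :
    X ⊗ₖ Matrix.diagonal d = blockDiagonal (fun j => d j • X) := by
  ext ⟨i, j⟩ ⟨k, l⟩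
  simp only [Matrix.kroneckerMap_apply, Matrix.blockDiagonal_apply, Matrix.diagonal_apply,
    Matrix.smul_apply, smul_eq_mul]
  split_ifs <;> ring

lemma kron_one {m' n' : ℕ} (X : Matrix (Fin m') (Fin m') ℂ) :
    X ⊗ₖ (1 : Matrix (Fin n') (Fin n') ℂ) = blockDiagonal (fun _ => X) := by
  rw [← Matrix.diagonal_one, kron_diag]
  simp

end Helpers

noncomputable def Pm (Nt : ℕ) (Δt : ℝ) (α : ℝ) (lam : ℂ) : Matrix (Fin Nt) (Fin Nt) ℂ :=
  (1 / (Δt : ℂ)) • ((1 : Matrix (Fin Nt) (Fin Nt) ℂ) - downShiftAlpha Nt (α : ℂ)) +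
    (1 / 2 : ℂ) • (lam • ((1 : Matrix (Fin Nt) (Fin Nt) ℂ) + downShiftAlpha Nt (α : ℂ)))

noncomputable def Tm (Nt : ℕ) (Δt : ℝ) (lam : ℂ) : Matrix (Fin Nt) (Fin Nt) ℂ :=
  (1 / (Δt : ℂ)) • ((1 : Matrix (Fin Nt) (Fin Nt) ℂ) - downShift Nt) +
    (1 / 2 : ℂ) • (lam • ((1 : Matrix (Fin Nt) (Fin Nt) ℂ) + downShift Nt))

set_option maxHeartbeats 1000000 in
lemma core (Nt : ℕ) (hNt : 2 ≤ Nt) (Δt : ℝ) (hΔt : 0 < Δt)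
    (α : ℝ) (hα : α ∈ Set.Ioo (0 : ℝ) 1) (lam : ℂ) (hlam : 0 ≤ lam.re) :
    IsUnit (Pm Nt Δt α lam) ∧
      ∀ z ∈ spectrum ℂ (1 - (Pm Nt Δt α lam)⁻¹ * Tm Nt Δt lam),
        ‖z‖ ≤ α / (1 - α) := by
  have hNt0 : 0 < Nt := by omega
  obtain ⟨hα0, hα1⟩ := hα
  set u : ℂ := 1 / (Δt : ℂ) with hu_def
  have hu : u = ((1 / Δt : ℝ) : ℂ) := by rw [hu_def]; push_cast; ring
  set a : ℂ := u + lam / 2 with ha_def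
  set b : ℂ := lam / 2 - u with hb_def
  have hvre : (lam / 2).re = lam.re / 2 := by
    rw [div_eq_mul_inv, Complex.mul_re]
    norm_num
    ring
  have hvim : (lam / 2).im = lam.im / 2 := by
    rw [div_eq_mul_inv, Complex.mul_im]
    norm_num
    ring
  have hΔt' : 0 < 1 / Δt := by positivity
  have hnormsq : Complex.normSq b ≤ Complex.normSq a := by
    simp only [ha_def, hb_def, Complex.normSq_apply, Complex.add_re, Complex.add_im,
      Complex.sub_re, Complex.sub_im, hvre, hvim, hu, Complex.ofReal_re, Complex.ofReal_im]
    nlinarith [hlam, hΔt']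
  have habs : ‖b‖ ≤ ‖a‖ := by
    rw [Complex.norm_def, Complex.norm_def]
    exact Real.sqrt_le_sqrt hnormsq
  have hare : 0 < a.re := by
    simp only [ha_def, Complex.add_re, hvre, hu, Complex.ofReal_re]
    nlinarith [hlam, hΔt']
  have ha : a ≠ 0 := by
    intro h
    rw [h, Complex.zero_re] at hare
    exact lt_irrefl _ hare
  have habsa : 0 < ‖a‖ := norm_pos_iff.mpr ha
  set Sa := downShiftAlpha Nt (α : ℂ) with hSa_def
  set x : Matrix (Fin Nt) (Fin Nt) ℂ := a • 1 with hx_def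
  set y : Matrix (Fin Nt) (Fin Nt) ℂ := (-b) • Sa with hy_def
  have hxy : Pm Nt Δt α lam = x - y := by
    ext i j
    simp only [Pm, hx_def, hy_def, ha_def, hb_def, Matrix.add_apply, Matrix.sub_apply,
      Matrix.smul_apply, Matrix.one_apply, smul_eq_mul]
    split_ifs <;> ring
  have hcomm : Commute x y := ((Commute.one_left Sa).smul_left a).smul_right (-b)
  set G : Matrix (Fin Nt) (Fin Nt) ℂ := ∑ i ∈ Finset.range Nt, x ^ i * y ^ (Nt - 1 - i)
    with hG_def
  have hSaN : Sa ^ Nt = (α : ℂ) • 1 := by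
    ext i l
    rw [hSa_def, sa_pow_apply Nt (α : ℂ) Nt le_rfl]
    have h1 : ¬((i : ℕ) = (l : ℕ) + Nt) := by have := i.2; omega
    rw [if_neg h1]
    by_cases h : i = l
    · subst h; simp
    · have h2 : ¬((i : ℕ) + Nt = (l : ℕ) + Nt) := fun hc => h (Fin.ext (by omega))
      simp [h2, Matrix.smul_apply, Matrix.one_apply, h, Fin.val_inj]
  have hxN : x ^ Nt = (a ^ Nt) • 1 := by rw [hx_def, smul_pow, one_pow]
  have hyN : y ^ Nt = ((-b) ^ Nt * (α : ℂ)) • 1 := by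
    rw [hy_def, smul_pow, hSaN, smul_smul]
  set g : ℂ := a ^ Nt - (-b) ^ Nt * (α : ℂ) with hg_def
  have hxyN : x ^ Nt - y ^ Nt = g • 1 := by rw [hxN, hyN, ← sub_smul]
  have hG1 : (x - y) * G = g • 1 := by rw [hcomm.mul_geom_sum₂, hxyN]
  have hG2 : G * (x - y) = g • 1 := by rw [hcomm.geom_sum₂_mul, hxyN]
  have hg : g ≠ 0 := by
    intro h0
    have he : a ^ Nt = (-b) ^ Nt * (α : ℂ) := by
      rw [hg_def] at h0; linear_combination h0
    have h1 : ‖a ^ Nt‖ = ‖(-b) ^ Nt * (α : ℂ)‖ := by rw [he]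
    rw [norm_pow, norm_mul, norm_pow, norm_neg, Complex.norm_real, Real.norm_eq_abs,
      abs_of_pos hα0] at h1
    have h2 : ‖b‖ ^ Nt * α ≤ ‖a‖ ^ Nt * α := by
      have := pow_le_pow_left₀ (norm_nonneg b) habs Nt
      nlinarith
    have h3 : ‖a‖ ^ Nt * α < ‖a‖ ^ Nt := by
      have : 0 < ‖a‖ ^ Nt := by positivity
      nlinarith
    nlinarith
  have hr : Pm Nt Δt α lam * (g⁻¹ • G) = 1 := by
    rw [hxy, Matrix.mul_smul, hG1, smul_smul, inv_mul_cancel₀ hg, one_smul]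
  have hli : (g⁻¹ • G) * Pm Nt Δt α lam = 1 := by
    rw [hxy, Matrix.smul_mul, hG2, smul_smul, inv_mul_cancel₀ hg, one_smul]
  have hPu : IsUnit (Pm Nt Δt α lam) := isUnit_iff_exists.mpr ⟨_, hr, hli⟩
  have hPinv : (Pm Nt Δt α lam)⁻¹ = g⁻¹ • G := Matrix.inv_eq_right_inv hr
  refine ⟨hPu, ?_⟩
  have hPT : Pm Nt Δt α lam - Tm Nt Δt lam = (b * (α : ℂ)) • cornerE Nt := by
    ext i j
    simp only [Pm, Tm, hb_def, downShiftAlpha, downShift, cornerE, Matrix.add_apply,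
      Matrix.sub_apply, Matrix.smul_apply, Matrix.one_apply, Matrix.of_apply, smul_eq_mul]
    split_ifs <;> ring
  have hMeq : 1 - (Pm Nt Δt α lam)⁻¹ * Tm Nt Δt lam
      = (g⁻¹ * (b * (α : ℂ))) • (G * cornerE Nt) := by
    have e0 : (Pm Nt Δt α lam)⁻¹ * Pm Nt Δt α lam = 1 := by rw [hPinv]; exact hli
    calc 1 - (Pm Nt Δt α lam)⁻¹ * Tm Nt Δt lam
        = (Pm Nt Δt α lam)⁻¹ * (Pm Nt Δt α lam - Tm Nt Δt lam) := by
          rw [Matrix.mul_sub, e0]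
      _ = (g⁻¹ * (b * (α : ℂ))) • (G * cornerE Nt) := by
          rw [hPT, hPinv, Matrix.smul_mul, Matrix.mul_smul, smul_smul]
  -- compute G * cornerE entries
  have hG0 : ∀ i : Fin Nt, G i ⟨0, hNt0⟩ = a ^ (Nt - 1 - (i : ℕ)) * (-b) ^ (i : ℕ) := by
    intro i
    rw [hG_def, Matrix.sum_apply]
    have hterm : ∀ k ∈ Finset.range Nt,
        (x ^ k * y ^ (Nt - 1 - k)) i ⟨0, hNt0⟩ =
          if (i : ℕ) = Nt - 1 - k then a ^ k * (-b) ^ (Nt - 1 - k) else 0 := by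
      intro k hk
      rw [Finset.mem_range] at hk
      have hxk : x ^ k = (a ^ k) • 1 := by rw [hx_def, smul_pow, one_pow]
      have hyk : y ^ (Nt - 1 - k) = ((-b) ^ (Nt - 1 - k)) • Sa ^ (Nt - 1 - k) := by
        rw [hy_def, smul_pow]
      rw [hxk, hyk, Matrix.smul_mul, Matrix.mul_smul, Matrix.one_mul, smul_smul,
        Matrix.smul_apply, hSa_def, sa_pow_apply Nt (α : ℂ) (Nt - 1 - k) (by omega)]
      simp only [Fin.val_mk, Nat.zero_add, smul_eq_mul]
      have h2 : ¬((i : ℕ) + Nt = Nt - 1 - k) := by have := i.2; omega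
      rw [if_neg h2]
      split_ifs <;> simp
    rw [Finset.sum_congr rfl hterm]
    rw [Finset.sum_eq_single (Nt - 1 - (i : ℕ))]
    · have e : Nt - 1 - (Nt - 1 - (i : ℕ)) = (i : ℕ) := by have := i.2; omega
      rw [if_pos (by omega), e]
    · intro k hk hkne
      rw [Finset.mem_range] at hk
      have : ¬((i : ℕ) = Nt - 1 - k) := by
        intro hc; apply hkne; have := i.2; omega
      rw [if_neg this]
    · intro hcon
      exfalso
      apply hcon
      rw [Finset.mem_range]
      have := i.2; omega
  have hGE : ∀ i l : Fin Nt, (G * cornerE Nt) i l =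
      if (l : ℕ) + 1 = Nt then a ^ (Nt - 1 - (i : ℕ)) * (-b) ^ (i : ℕ) else 0 := by
    intro i l
    rw [Matrix.mul_apply]
    by_cases hl : (l : ℕ) + 1 = Nt
    · rw [if_pos hl, Finset.sum_eq_single (⟨0, hNt0⟩ : Fin Nt)]
      · have hE : cornerE Nt ⟨0, hNt0⟩ l = 1 := by simp [cornerE, hl]
        rw [hE, mul_one, hG0]
      · intro r _ hr
        have : ¬((r : ℕ) = 0 ∧ (l : ℕ) + 1 = Nt) := by
          intro ⟨hc, _⟩; exact hr (Fin.ext hc)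
        simp [cornerE, this]
      · simp
    · rw [if_neg hl]
      apply Finset.sum_eq_zero
      intro r _
      simp [cornerE, hl]
  have hMentry : ∀ i l : Fin Nt, (1 - (Pm Nt Δt α lam)⁻¹ * Tm Nt Δt lam) i l =
      if (l : ℕ) + 1 = Nt then
        (g⁻¹ * (b * (α : ℂ))) * (a ^ (Nt - 1 - (i : ℕ)) * (-b) ^ (i : ℕ)) else 0 := by
    intro i l
    rw [hMeq, Matrix.smul_apply, hGE, smul_eq_mul, mul_ite, mul_zero]
  have htri : ∀ i j : Fin Nt, j < i →
      (1 - (Pm Nt Δt α lam)⁻¹ * Tm Nt Δt lam) i j = 0 := by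
    intro i j hij
    rw [hMentry]
    have h1 : (j : ℕ) < (i : ℕ) := hij
    have h2 : ¬((j : ℕ) + 1 = Nt) := by have := i.2; omega
    rw [if_neg h2]
  intro z hz
  obtain ⟨i, hi⟩ := spectrum_triu _ htri hz
  rw [hMentry i i] at hi
  have hbound0 : (0 : ℝ) ≤ α / (1 - α) := by
    apply div_nonneg (le_of_lt hα0); linarith
  by_cases hii : (i : ℕ) + 1 = Nt
  · rw [if_pos hii] at hi
    have hNt1 : Nt - 1 - (i : ℕ) = 0 := by omega
    have hiv : (i : ℕ) = Nt - 1 := by omega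
    rw [hNt1, pow_zero, one_mul, hiv] at hi
    set B := ‖b‖ with hB_def
    have hBnn : 0 ≤ B := norm_nonneg b
    have hgpos : 0 < ‖g‖ := norm_pos_iff.mpr hg
    have habsz : ‖z‖ = α * B ^ Nt / ‖g‖ := by
      rw [hi]
      rw [norm_mul, norm_mul, norm_inv, norm_mul, norm_pow,
        norm_neg, Complex.norm_real, Real.norm_eq_abs, abs_of_pos hα0]
      have hBpow : B ^ Nt = B * B ^ (Nt - 1) := by
        rw [← pow_succ']
        congr 1
        omega
      rw [hBpow]
      field_simp
      ring
    have hg_lb : (1 - α) * B ^ Nt ≤ ‖g‖ := by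
      have h1 : ‖a ^ Nt‖ - ‖(-b) ^ Nt * (α : ℂ)‖
          ≤ ‖g‖ := by
        rw [hg_def]
        exact
          norm_sub_norm_le (a ^ Nt) ((-b) ^ Nt * (α : ℂ))
      rw [norm_pow, norm_mul, norm_pow, norm_neg, Complex.norm_real, Real.norm_eq_abs,
        abs_of_pos hα0] at h1
      have h2 : B ^ Nt ≤ ‖a‖ ^ Nt :=
        pow_le_pow_left₀ hBnn habs Nt
      nlinarith
    rw [habsz]
    rw [div_le_iff₀ hgpos]
    have h1α : (1 - α) ≠ 0 := by linarith
    have hc : (α / (1 - α)) * ((1 - α) * B ^ Nt) = α * B ^ Nt := by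
      field_simp
    calc α * B ^ Nt = (α / (1 - α)) * ((1 - α) * B ^ Nt) := hc.symm
      _ ≤ (α / (1 - α)) * ‖g‖ :=
          mul_le_mul_of_nonneg_left hg_lb hbound0
  · rw [if_neg hii] at hi
    rw [hi]
    simpa using hbound0

set_option maxHeartbeats 1000000 in
/-- ParaDiag-II (Trapezoidal rule): for a diagonalizable `A` whose eigenvalues have
nonnegative real part, the block α-circulant preconditioner `P_α` of the Trapezoidal-rule
all-at-once matrix `𝐀` is invertible and `ρ(I - P_α⁻¹ 𝐀) ≤ α/(1-α)`. -/
theorem paraDiagII_TR_spectralRadius_bound (Nx Nt : ℕ) (hNt : 2 ≤ Nt)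
    (A : Matrix (Fin Nx) (Fin Nx) ℂ)
    (hdiag : ∃ (P : Matrix (Fin Nx) (Fin Nx) ℂ) (d : Fin Nx → ℂ),
      IsUnit P ∧ A = P⁻¹ * Matrix.diagonal d * P)
    (hspec : ∀ μ ∈ spectrum ℂ A, 0 ≤ μ.re)
    (Δt : ℝ) (hΔt : 0 < Δt) (α : ℝ) (hα : α ∈ Set.Ioo (0 : ℝ) 1) :
    let It : Matrix (Fin Nt) (Fin Nt) ℂ := 1
    let Ix : Matrix (Fin Nx) (Fin Nx) ℂ := 1
    let AA := (1 / (Δt : ℂ)) • ((It - downShift Nt) ⊗ₖ Ix) +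
             (1 / 2 : ℂ) • ((It + downShift Nt) ⊗ₖ A)
    let Pα := (1 / (Δt : ℂ)) • ((It - downShiftAlpha Nt (α : ℂ)) ⊗ₖ Ix) +
              (1 / 2 : ℂ) • ((It + downShiftAlpha Nt (α : ℂ)) ⊗ₖ A)
    IsUnit Pα ∧ ∀ z ∈ spectrum ℂ (1 - Pα⁻¹ * AA), ‖z‖ ≤ α / (1 - α) := by
  intro It Ix AA Pα
  obtain ⟨P, d, hP, hA⟩ := hdiag
  have hPdet : IsUnit P.det := (Matrix.isUnit_iff_isUnit_det P).mp hP
  set D : Matrix (Fin Nx) (Fin Nx) ℂ := Matrix.diagonal d with hD_def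
  set Q : Matrix (Fin Nt × Fin Nx) (Fin Nt × Fin Nx) ℂ :=
    (1 : Matrix (Fin Nt) (Fin Nt) ℂ) ⊗ₖ P with hQ_def
  set Q' : Matrix (Fin Nt × Fin Nx) (Fin Nt × Fin Nx) ℂ :=
    (1 : Matrix (Fin Nt) (Fin Nt) ℂ) ⊗ₖ P⁻¹ with hQ'_def
  have hQQ' : Q * Q' = 1 := by
    rw [hQ_def, hQ'_def, ← Matrix.mul_kronecker_mul, Matrix.one_mul,
      Matrix.mul_nonsing_inv _ hPdet, Matrix.one_kronecker_one]
  have hQ'Q : Q' * Q = 1 := by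
    rw [hQ_def, hQ'_def, ← Matrix.mul_kronecker_mul, Matrix.one_mul,
      Matrix.nonsing_inv_mul _ hPdet, Matrix.one_kronecker_one]
  have kstep : ∀ (X : Matrix (Fin Nt) (Fin Nt) ℂ) (B : Matrix (Fin Nx) (Fin Nx) ℂ),
      Q' * (X ⊗ₖ B) * Q = X ⊗ₖ (P⁻¹ * B * P) := by
    intro X B
    rw [hQ_def, hQ'_def, ← Matrix.mul_kronecker_mul, ← Matrix.mul_kronecker_mul,
      Matrix.one_mul, Matrix.mul_one]
  have hAX : ∀ X : Matrix (Fin Nt) (Fin Nt) ℂ, X ⊗ₖ A = Q' * (X ⊗ₖ D) * Q := by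
    intro X
    rw [kstep X D, ← hA]
  have hIX : ∀ X : Matrix (Fin Nt) (Fin Nt) ℂ,
      X ⊗ₖ (1 : Matrix (Fin Nx) (Fin Nx) ℂ) = Q' * (X ⊗ₖ 1) * Q := by
    intro X
    rw [kstep X 1, Matrix.mul_one, Matrix.nonsing_inv_mul _ hPdet]
  have distrib : ∀ (X Y : Matrix (Fin Nt × Fin Nx) (Fin Nt × Fin Nx) ℂ) (c c' : ℂ),
      Q' * (c • X + c' • Y) * Q = c • (Q' * X * Q) + c' • (Q' * Y * Q) := by
    intro X Y c c'
    rw [Matrix.mul_add, Matrix.add_mul, Matrix.mul_smul, Matrix.smul_mul,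
      Matrix.mul_smul, Matrix.smul_mul]
  set TD : Matrix (Fin Nt × Fin Nx) (Fin Nt × Fin Nx) ℂ :=
    (1 / (Δt : ℂ)) • (((1 : Matrix (Fin Nt) (Fin Nt) ℂ) - downShift Nt) ⊗ₖ
      (1 : Matrix (Fin Nx) (Fin Nx) ℂ)) +
    (1 / 2 : ℂ) • (((1 : Matrix (Fin Nt) (Fin Nt) ℂ) + downShift Nt) ⊗ₖ D) with hTD_def
  set PD : Matrix (Fin Nt × Fin Nx) (Fin Nt × Fin Nx) ℂ :=
    (1 / (Δt : ℂ)) • (((1 : Matrix (Fin Nt) (Fin Nt) ℂ) - downShiftAlpha Nt (α : ℂ)) ⊗ₖ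
      (1 : Matrix (Fin Nx) (Fin Nx) ℂ)) +
    (1 / 2 : ℂ) • (((1 : Matrix (Fin Nt) (Fin Nt) ℂ) + downShiftAlpha Nt (α : ℂ)) ⊗ₖ D)
    with hPD_def
  have hAAc : AA = Q' * TD * Q := by
    show (1 / (Δt : ℂ)) • ((((1 : Matrix (Fin Nt) (Fin Nt) ℂ)) - downShift Nt) ⊗ₖ
        (1 : Matrix (Fin Nx) (Fin Nx) ℂ)) +
      (1 / 2 : ℂ) • (((1 : Matrix (Fin Nt) (Fin Nt) ℂ) + downShift Nt) ⊗ₖ A) = Q' * TD * Q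
    rw [hTD_def, distrib, ← hAX, ← hIX]
  have hPαc : Pα = Q' * PD * Q := by
    show (1 / (Δt : ℂ)) • ((((1 : Matrix (Fin Nt) (Fin Nt) ℂ)) - downShiftAlpha Nt (α : ℂ)) ⊗ₖ
        (1 : Matrix (Fin Nx) (Fin Nx) ℂ)) +
      (1 / 2 : ℂ) • (((1 : Matrix (Fin Nt) (Fin Nt) ℂ) + downShiftAlpha Nt (α : ℂ)) ⊗ₖ A)
        = Q' * PD * Q
    rw [hPD_def, distrib, ← hAX, ← hIX]
  have hTDb : TD = blockDiagonal (fun j => Tm Nt Δt (d j)) := by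
    rw [hTD_def, hD_def, kron_one, kron_diag, ← Matrix.blockDiagonal_smul,
      ← Matrix.blockDiagonal_smul, ← Matrix.blockDiagonal_add]
    congr 1
  have hPDb : PD = blockDiagonal (fun j => Pm Nt Δt α (d j)) := by
    rw [hPD_def, hD_def, kron_one, kron_diag, ← Matrix.blockDiagonal_smul,
      ← Matrix.blockDiagonal_smul, ← Matrix.blockDiagonal_add]
    congr 1
  have hdm : ∀ j, 0 ≤ (d j).re := by
    intro j
    have hmem : d j ∈ spectrum ℂ A := by
      rw [spectrum.mem_iff]
      intro hU
      have hPinvu : IsUnit (P⁻¹) := by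
        rw [Matrix.isUnit_iff_isUnit_det]
        refine IsUnit.of_mul_eq_one P.det ?_
        rw [← Matrix.det_mul, Matrix.nonsing_inv_mul _ hPdet, Matrix.det_one]
      have hconjA : algebraMap ℂ (Matrix (Fin Nx) (Fin Nx) ℂ) (d j) - A
          = P⁻¹ * (algebraMap ℂ (Matrix (Fin Nx) (Fin Nx) ℂ) (d j) - D) * P := by
        rw [hA, Matrix.mul_sub, Matrix.sub_mul]
        congr 1
        rw [Algebra.algebraMap_eq_smul_one, Matrix.mul_smul, Matrix.mul_one,
          Matrix.smul_mul, Matrix.nonsing_inv_mul _ hPdet]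
      rw [hconjA] at hU
      have h2 : IsUnit (P * (P⁻¹ * (algebraMap ℂ (Matrix (Fin Nx) (Fin Nx) ℂ) (d j) - D) * P)
          * P⁻¹) := (hP.mul hU).mul hPinvu
      have h3 : P * (P⁻¹ * (algebraMap ℂ (Matrix (Fin Nx) (Fin Nx) ℂ) (d j) - D) * P) * P⁻¹
          = algebraMap ℂ (Matrix (Fin Nx) (Fin Nx) ℂ) (d j) - D := by
        rw [← Matrix.mul_assoc, ← Matrix.mul_assoc, Matrix.mul_nonsing_inv _ hPdet,
          Matrix.one_mul, Matrix.mul_assoc, Matrix.mul_nonsing_inv _ hPdet, Matrix.mul_one]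
      rw [h3] at h2
      rw [Matrix.isUnit_iff_isUnit_det] at h2
      have h5 : algebraMap ℂ (Matrix (Fin Nx) (Fin Nx) ℂ) (d j) - D
          = Matrix.diagonal (fun i => d j - d i) := by
        rw [Matrix.algebraMap_eq_diagonal, hD_def, Matrix.diagonal_sub]
        congr 1
      have h4 : (algebraMap ℂ (Matrix (Fin Nx) (Fin Nx) ℂ) (d j) - D).det = 0 := by
        rw [h5, Matrix.det_diagonal]
        exact Finset.prod_eq_zero (Finset.mem_univ j) (by simp)
      rw [h4] at h2
      exact h2.ne_zero rfl
    exact hspec _ hmem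
  have hcore := fun j => core Nt hNt Δt hΔt α hα (d j) (hdm j)
  set Bd : Matrix (Fin Nt × Fin Nx) (Fin Nt × Fin Nx) ℂ :=
    blockDiagonal (fun j => Pm Nt Δt α (d j)) with hBd_def
  set Bdinv : Matrix (Fin Nt × Fin Nx) (Fin Nt × Fin Nx) ℂ :=
    blockDiagonal (fun j => (Pm Nt Δt α (d j))⁻¹) with hBdinv_def
  have hPDu := blockDiagonal_isUnit (fun j => Pm Nt Δt α (d j)) (fun j => (hcore j).1)
  have hBdd : IsUnit Bd.det := (Matrix.isUnit_iff_isUnit_det _).mp hPDu.1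
  have hBd1 : Bd * Bdinv = 1 := by
    rw [hBdinv_def, ← hPDu.2]
    exact Matrix.mul_nonsing_inv _ hBdd
  have hBd2 : Bdinv * Bd = 1 := by
    rw [hBdinv_def, ← hPDu.2]
    exact Matrix.nonsing_inv_mul _ hBdd
  have hPα1 : Pα * (Q' * Bdinv * Q) = 1 := by
    rw [hPαc, hPDb]
    have e1 : (Q' * Bd * Q) * (Q' * Bdinv * Q) = Q' * Bd * (Q * Q') * Bdinv * Q := by
      simp only [Matrix.mul_assoc]
    rw [e1, hQQ', Matrix.mul_one, Matrix.mul_assoc Q' Bd Bdinv, hBd1, Matrix.mul_one, hQ'Q]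
  have hPα2 : (Q' * Bdinv * Q) * Pα = 1 := by
    rw [hPαc, hPDb]
    have e1 : (Q' * Bdinv * Q) * (Q' * Bd * Q) = Q' * Bdinv * (Q * Q') * Bd * Q := by
      simp only [Matrix.mul_assoc]
    rw [e1, hQQ', Matrix.mul_one, Matrix.mul_assoc Q' Bdinv Bd, hBd2, Matrix.mul_one, hQ'Q]
  have hPαu : IsUnit Pα := isUnit_iff_exists.mpr ⟨_, hPα1, hPα2⟩
  refine ⟨hPαu, ?_⟩
  have hPαinv : Pα⁻¹ = Q' * Bdinv * Q := Matrix.inv_eq_right_inv hPα1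
  have hMac : 1 - Pα⁻¹ * AA
      = Q' * (blockDiagonal fun j => 1 - (Pm Nt Δt α (d j))⁻¹ * Tm Nt Δt (d j)) * Q := by
    rw [hPαinv, hAAc, hTDb]
    have e1 : (Q' * Bdinv * Q) * (Q' * (blockDiagonal fun j => Tm Nt Δt (d j)) * Q)
        = Q' * Bdinv * (Q * Q') * (blockDiagonal fun j => Tm Nt Δt (d j)) * Q := by
      simp only [Matrix.mul_assoc]
    rw [e1, hQQ', Matrix.mul_one]
    have e2 : (1 : Matrix (Fin Nt × Fin Nx) (Fin Nt × Fin Nx) ℂ) = Q' * 1 * Q := by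
      rw [Matrix.mul_one, hQ'Q]
    nth_rewrite 1 [e2]
    have e3 : (1 : Matrix (Fin Nt × Fin Nx) (Fin Nt × Fin Nx) ℂ)
        - Bdinv * (blockDiagonal fun j => Tm Nt Δt (d j))
        = blockDiagonal (fun j => 1 - (Pm Nt Δt α (d j))⁻¹ * Tm Nt Δt (d j)) := by
      rw [hBdinv_def, ← Matrix.blockDiagonal_mul,
        ← Matrix.blockDiagonal_one (m := Fin Nt) (o := Fin Nx) (α := ℂ),
        ← Matrix.blockDiagonal_sub]
      congr 1
    rw [Matrix.mul_assoc Q' Bdinv _, ← Matrix.sub_mul, ← Matrix.mul_sub, e3]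
  intro z hz
  rw [hMac] at hz
  have hz2 := spectrum_conj_mem hQQ' hQ'Q hz
  obtain ⟨j, hzj⟩ := spectrum_blockDiagonal_subset _ hz2
  exact (hcore j).2 z hzj
end

section
/- Let r ≥ 0 and let A ∈ ℂ^{N_x×N_x} be diagonalizable with every eigenvalue λ of A satisfying Re(λ) ≥ r. Let Δt > 0, N_t ≥ 2 and α ∈ (0,1). Define the Backward-Euler all-at-once matrix 𝐀 = (1/Δt)(I − S) ⊗ I_x + I ⊗ A and its α-circulant approximation P_α = (1/Δt)(I − S_α) ⊗ I_x + I ⊗ A. Then P_α is invertible and, with η := (1 + Δt·r)^{−N_t} ≤ 1, the spectral radius of the iteration matrix satisfies ρ(I − P_α^{-1}𝐀) ≤ α·η/(1 − α·η). (For N_t = T/Δt steps on a time window of length T, η converges to e^{−Tr} as N_t → ∞, giving the convergence factor α e^{−Tr}/(1 − α e^{−Tr}).) -/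
open Matrix
open scoped Kronecker

namespace PD

section Gen
variable {m o : Type*} [Fintype m] [DecidableEq m] [Fintype o] [DecidableEq o]

lemma isUnit_conj_iff (Q X : Matrix m m ℂ) (hQ : IsUnit Q) :
    IsUnit (Q * X * Q⁻¹) ↔ IsUnit X := by
  have hd := (Matrix.isUnit_iff_isUnit_det Q).mp hQ
  have h1 : Q * Q⁻¹ = 1 := Matrix.mul_nonsing_inv Q hd
  have h2 : Q⁻¹ * Q = 1 := Matrix.nonsing_inv_mul Q hd
  have hQi : IsUnit Q⁻¹ := (Matrix.isUnit_nonsing_inv_iff).mpr hQ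
  constructor
  · intro h
    have : X = Q⁻¹ * (Q * X * Q⁻¹) * Q := by
      rw [Matrix.mul_assoc, Matrix.mul_assoc, Matrix.mul_assoc, h2, Matrix.mul_one,
        ← Matrix.mul_assoc, h2, Matrix.one_mul]
    rw [this]; exact (hQi.mul h).mul hQ
  · intro h
    exact (hQ.mul h).mul hQi

lemma spectrum_conj (Q X : Matrix m m ℂ) (hQ : IsUnit Q) :
    spectrum ℂ (Q * X * Q⁻¹) = spectrum ℂ X := by
  have hd := (Matrix.isUnit_iff_isUnit_det Q).mp hQ
  have h1 : Q * Q⁻¹ = 1 := Matrix.mul_nonsing_inv Q hd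
  ext z
  simp only [spectrum.mem_iff]
  have key : algebraMap ℂ (Matrix m m ℂ) z - Q * X * Q⁻¹
      = Q * (algebraMap ℂ (Matrix m m ℂ) z - X) * Q⁻¹ := by
    rw [Matrix.mul_sub, Matrix.sub_mul, Algebra.algebraMap_eq_smul_one]
    rw [Matrix.mul_smul, Matrix.mul_one, Matrix.smul_mul, h1]
  rw [key, isUnit_conj_iff _ _ hQ]

lemma quad_spectrum (M : Matrix m m ℂ) (μ z : ℂ) (hM : M * M = μ • M)
    (hz : z ∈ spectrum ℂ M) : z = 0 ∨ z = μ := by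
  by_contra h
  push_neg at h
  obtain ⟨h0, hμ⟩ := h
  rw [spectrum.mem_iff] at hz
  apply hz
  set c : ℂ := (z * (z - μ))⁻¹ with hc
  have hzμ : z - μ ≠ 0 := sub_ne_zero.mpr hμ
  set K : Matrix m m ℂ := z⁻¹ • 1 + c • M with hK
  have hmul : (algebraMap ℂ (Matrix m m ℂ) z - M) * K = 1 := by
    rw [Algebra.algebraMap_eq_smul_one, hK]
    rw [Matrix.sub_mul, Matrix.mul_add, Matrix.mul_add, Matrix.smul_mul, Matrix.smul_mul]
    rw [Matrix.one_mul, Matrix.one_mul, Matrix.mul_smul, Matrix.mul_smul, Matrix.mul_one, hM]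
    rw [smul_smul, smul_smul, smul_smul, mul_inv_cancel₀ h0, one_smul]
    have e3 : z * c = z⁻¹ + c * μ := by
      rw [hc]; field_simp; ring
    rw [e3, add_smul]
    abel
  have hdet := congrArg Matrix.det hmul
  rw [Matrix.det_mul, Matrix.det_one] at hdet
  exact (Matrix.isUnit_iff_isUnit_det _).mpr (IsUnit.of_mul_eq_one _ hdet)

lemma isUnit_blockDiagonal (f : o → Matrix m m ℂ) (h : ∀ x, IsUnit (f x)) :
    IsUnit (Matrix.blockDiagonal f) := by
  rw [Matrix.isUnit_iff_isUnit_det, Matrix.det_blockDiagonal, isUnit_iff_ne_zero]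
  exact Finset.prod_ne_zero_iff.mpr fun x _ =>
    isUnit_iff_ne_zero.mp ((Matrix.isUnit_iff_isUnit_det _).mp (h x))

lemma spectrum_blockDiagonal_subset (f : o → Matrix m m ℂ) (z : ℂ)
    (hz : z ∈ spectrum ℂ (Matrix.blockDiagonal f)) : ∃ x, z ∈ spectrum ℂ (f x) := by
  rw [spectrum.mem_iff] at hz
  by_contra h
  push_neg at h
  apply hz
  have hall : ∀ x, IsUnit (algebraMap ℂ (Matrix m m ℂ) z - f x) := by
    intro x
    by_contra hx
    exact (h x) ((spectrum.mem_iff).mpr hx)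
  have : algebraMap ℂ (Matrix (m × o) (m × o) ℂ) z - Matrix.blockDiagonal f
      = Matrix.blockDiagonal (fun x => algebraMap ℂ (Matrix m m ℂ) z - f x) := by
    ext ⟨i, x⟩ ⟨j, y⟩
    simp only [Algebra.algebraMap_eq_smul_one, Matrix.sub_apply, Matrix.smul_apply,
      Matrix.one_apply, Matrix.blockDiagonal_apply, Prod.mk.injEq, smul_eq_mul, mul_ite,
      mul_one, mul_zero]
    by_cases hxy : x = y <;> by_cases hij : i = j <;> simp [hxy, hij]
  rw [this]
  exact isUnit_blockDiagonal _ hall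

end Gen

lemma kron_decomp {N Nx : ℕ} (X : Matrix (Fin N) (Fin N) ℂ) (d : Fin Nx → ℂ) :
    X ⊗ₖ (1 : Matrix (Fin Nx) (Fin Nx) ℂ) + (1 : Matrix (Fin N) (Fin N) ℂ) ⊗ₖ Matrix.diagonal d
      = Matrix.blockDiagonal (fun x => X + d x • 1) := by
  ext ⟨t, x⟩ ⟨t', x'⟩
  simp only [Matrix.add_apply, Matrix.kroneckerMap_apply, Matrix.blockDiagonal_apply,
    Matrix.one_apply, Matrix.diagonal_apply, Matrix.smul_apply, smul_eq_mul]
  by_cases hx : x = x' <;> by_cases ht : t = t' <;> simp [hx, ht]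

lemma shiftAlpha_apply (n : ℕ) (α : ℂ) (i k : Fin (n+1)) :
    downShiftAlpha (n+1) α i k
      = (if (i:ℕ) = (k:ℕ) + 1 then (1:ℂ) else 0)
        + α * (if (i:ℕ) = 0 ∧ (k:ℕ) = n then 1 else 0) := by
  simp only [downShiftAlpha, downShift, Matrix.add_apply, Matrix.smul_apply, Matrix.of_apply,
    smul_eq_mul, add_left_inj]

lemma shiftAlpha_mul_zero (n : ℕ) (α : ℂ) (X : Matrix (Fin (n+1)) (Fin (n+1)) ℂ)
    (i : Fin (n+1)) (hi : (i : ℕ) = 0) (j : Fin (n+1)) :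
    (downShiftAlpha (n+1) α * X) i j = α * X (Fin.last n) j := by
  rw [Matrix.mul_apply, Finset.sum_eq_single (Fin.last n)]
  · rw [shiftAlpha_apply]
    simp [hi, Fin.last]
  · intro b _ hb
    have hbn : (b:ℕ) ≠ n := fun h => hb (Fin.ext (by simp [Fin.last, h]))
    rw [shiftAlpha_apply]
    simp [hi, hbn]
  · simp

lemma shiftAlpha_mul_succ (n : ℕ) (α : ℂ) (X : Matrix (Fin (n+1)) (Fin (n+1)) ℂ)
    (i : Fin (n+1)) (hi : (i : ℕ) ≠ 0) (j : Fin (n+1)) :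
    (downShiftAlpha (n+1) α * X) i j = X ⟨(i:ℕ) - 1, by omega⟩ j := by
  rw [Matrix.mul_apply, Finset.sum_eq_single (⟨(i:ℕ) - 1, by omega⟩ : Fin (n+1))]
  · rw [shiftAlpha_apply]
    have : (i:ℕ) = ((⟨(i:ℕ) - 1, by omega⟩ : Fin (n+1)) : ℕ) + 1 := by simp; omega
    simp [hi, ← this]
  · intro b _ hb
    have hbn : (i:ℕ) ≠ (b:ℕ) + 1 := by
      intro h; apply hb; apply Fin.ext; simp; omega
    rw [shiftAlpha_apply]
    simp [hi, hbn]
  · simp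

noncomputable def Emat (n : ℕ) : Matrix (Fin (n+1)) (Fin (n+1)) ℂ :=
  Matrix.of fun i j : Fin (n+1) => if (i : ℕ) = 0 ∧ (j : ℕ) = n then (1 : ℂ) else 0

noncomputable def Rmat (n : ℕ) (w : ℂ) : Matrix (Fin (n+1)) (Fin (n+1)) ℂ :=
  Matrix.of fun i j => if (j : ℕ) = n then w ^ (n - (i : ℕ)) else 0

noncomputable def Gmat (n : ℕ) (w α : ℂ) : Matrix (Fin (n+1)) (Fin (n+1)) ℂ :=
  Matrix.of fun i j =>
    if (j : ℕ) ≤ (i : ℕ) then w ^ (n - ((i : ℕ) - (j : ℕ)))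
    else α * w ^ ((j : ℕ) - (i : ℕ) - 1)

lemma entry_helper (n : ℕ) (α w : ℂ) (X : Matrix (Fin (n+1)) (Fin (n+1)) ℂ) (i j : Fin (n+1)) :
    ((w • (1 : Matrix (Fin (n+1)) (Fin (n+1)) ℂ) - downShiftAlpha (n+1) α) * X) i j
      = w * X i j - (downShiftAlpha (n+1) α * X) i j := by
  rw [Matrix.sub_mul, Matrix.smul_mul, Matrix.one_mul, Matrix.sub_apply, Matrix.smul_apply,
    smul_eq_mul]

lemma key3 (n : ℕ) (w : ℂ) : Rmat n w * Rmat n w = Rmat n w := by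
  ext i j
  rw [Matrix.mul_apply, Finset.sum_eq_single (Fin.last n)]
  · simp [Rmat, Fin.last]
  · intro b _ hb
    have hbn : (b:ℕ) ≠ n := fun h => hb (Fin.ext (by simp [Fin.last, h]))
    simp [Rmat, hbn]
  · simp

lemma key2 (n : ℕ) (w α : ℂ) :
    (w • (1 : Matrix (Fin (n+1)) (Fin (n+1)) ℂ) - downShiftAlpha (n+1) α) * Rmat n w
      = (w ^ (n+1) - α) • Emat n := by
  ext i j
  rw [entry_helper, Matrix.smul_apply, smul_eq_mul]
  by_cases hi : (i : ℕ) = 0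
  · rw [shiftAlpha_mul_zero _ _ _ _ hi]
    by_cases hj : (j : ℕ) = n
    · have h0 : n - (i:ℕ) = n := by omega
      simp [Rmat, Emat, hi, hj, Fin.last, h0, pow_succ]
      rw [if_pos (Fin.ext hi)]
      ring
    · simp [Rmat, Emat, hj]
  · rw [shiftAlpha_mul_succ _ _ _ _ hi]
    by_cases hj : (j : ℕ) = n
    · have h0 : n - ((i:ℕ) - 1) = (n - (i:ℕ)) + 1 := by omega
      simp [Rmat, Emat, hi, hj, h0, pow_succ]
      rw [if_neg (fun h => hi (by simp [h]))]
      ring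
    · simp [Rmat, Emat, hj]

lemma key1 (n : ℕ) (w α : ℂ) :
    (w • (1 : Matrix (Fin (n+1)) (Fin (n+1)) ℂ) - downShiftAlpha (n+1) α) * Gmat n w α
      = (w ^ (n+1) - α) • (1 : Matrix (Fin (n+1)) (Fin (n+1)) ℂ) := by
  ext i j
  rw [entry_helper, Matrix.smul_apply, smul_eq_mul, Matrix.one_apply]
  have hjle : (j:ℕ) ≤ n := by omega
  have hile : (i:ℕ) ≤ n := by omega
  by_cases hi : (i : ℕ) = 0
  · rw [shiftAlpha_mul_zero _ _ _ _ hi]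
    simp only [Gmat, Matrix.of_apply, Fin.val_last]
    by_cases hj : (j : ℕ) = 0
    · have hij : i = j := Fin.ext (by omega)
      rw [if_pos (by omega : (j:ℕ) ≤ (i:ℕ)), if_pos (by omega : (j:ℕ) ≤ n), if_pos hij]
      rw [(by omega : n - ((i:ℕ) - (j:ℕ)) = n), (by omega : n - (n - (j:ℕ)) = 0), pow_succ,
        pow_zero]
      ring
    · have hij : ¬ (i = j) := fun h => hj (by rw [← congrArg Fin.val h, hi])
      rw [if_neg (by omega : ¬ ((j:ℕ) ≤ (i:ℕ))), if_pos (by omega : (j:ℕ) ≤ n), if_neg hij]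
      rw [(by omega : (j:ℕ) - (i:ℕ) - 1 = (j:ℕ) - 1),
        (by omega : n - (n - (j:ℕ)) = ((j:ℕ) - 1) + 1), pow_succ]
      ring
  · rw [shiftAlpha_mul_succ _ _ _ _ hi]
    simp only [Gmat, Matrix.of_apply]
    rcases lt_trichotomy (j:ℕ) (i:ℕ) with hlt | heq | hgt
    · have hij : ¬ (i = j) := fun h => absurd (congrArg Fin.val h) (by omega)
      rw [if_pos (le_of_lt hlt), if_pos (by omega : (j:ℕ) ≤ (i:ℕ) - 1), if_neg hij]
      rw [(by omega : n - ((i:ℕ) - 1 - (j:ℕ)) = n - ((i:ℕ) - (j:ℕ)) + 1), pow_succ]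
      ring
    · have hij : i = j := Fin.ext heq.symm
      rw [if_pos (by omega : (j:ℕ) ≤ (i:ℕ)), if_neg (by omega : ¬ ((j:ℕ) ≤ (i:ℕ) - 1)),
        if_pos hij]
      rw [(by omega : n - ((i:ℕ) - (j:ℕ)) = n), (by omega : (j:ℕ) - ((i:ℕ) - 1) - 1 = 0),
        pow_succ, pow_zero]
      ring
    · have hij : ¬ (i = j) := fun h => absurd (congrArg Fin.val h) (by omega)
      rw [if_neg (by omega : ¬ ((j:ℕ) ≤ (i:ℕ))), if_neg (by omega : ¬ ((j:ℕ) ≤ (i:ℕ) - 1)),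
        if_neg hij]
      rw [(by omega : (j:ℕ) - ((i:ℕ) - 1) - 1 = ((j:ℕ) - (i:ℕ) - 1) + 1), pow_succ]
      ring

lemma sub_eq (n : ℕ) (α : ℂ) :
    downShift (n+1) - downShiftAlpha (n+1) α = -(α • Emat n) := by
  have : downShiftAlpha (n+1) α = downShift (n+1) + α • Emat n := by
    ext i j
    rw [shiftAlpha_apply]
    simp only [Matrix.add_apply, Matrix.smul_apply, Emat, Matrix.of_apply, downShift,
      smul_eq_mul]
  rw [this]
  abel

end PD

open PD

/-- ParaDiag-II (Backward-Euler): for a diagonalizable `A` whose eigenvalues have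
real part at least `r ≥ 0`, the block α-circulant preconditioner `P_α` of the
Backward-Euler all-at-once matrix `𝐀` is invertible and, with
`η = (1 + Δt·r)^{-N_t} ≤ 1`, the iteration matrix satisfies
`ρ(I - P_α⁻¹ 𝐀) ≤ αη/(1 - αη)`. -/
theorem paraDiagII_BE_spectralRadius_bound (Nx Nt : ℕ) (hNt : 2 ≤ Nt)
    (r : ℝ) (hr : 0 ≤ r)
    (A : Matrix (Fin Nx) (Fin Nx) ℂ)
    (hdiag : ∃ (P : Matrix (Fin Nx) (Fin Nx) ℂ) (d : Fin Nx → ℂ),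
      IsUnit P ∧ A = P⁻¹ * Matrix.diagonal d * P)
    (hspec : ∀ μ ∈ spectrum ℂ A, r ≤ μ.re)
    (Δt : ℝ) (hΔt : 0 < Δt) (α : ℝ) (hα : α ∈ Set.Ioo (0 : ℝ) 1) :
    let It : Matrix (Fin Nt) (Fin Nt) ℂ := 1
    let Ix : Matrix (Fin Nx) (Fin Nx) ℂ := 1
    let AA := (1 / (Δt : ℂ)) • ((It - downShift Nt) ⊗ₖ Ix) + It ⊗ₖ A
    let Pα := (1 / (Δt : ℂ)) • ((It - downShiftAlpha Nt (α : ℂ)) ⊗ₖ Ix) + It ⊗ₖ A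
    let η : ℝ := ((1 + Δt * r) ^ Nt)⁻¹
    η ≤ 1 ∧ IsUnit Pα ∧
      ∀ z ∈ spectrum ℂ (1 - Pα⁻¹ * AA), ‖z‖ ≤ α * η / (1 - α * η) := by
  obtain ⟨P, d, hP, hA⟩ := hdiag
  obtain ⟨n, rfl⟩ : ∃ n, Nt = n + 1 := ⟨Nt - 1, by omega⟩
  obtain ⟨hα0, hα1⟩ := hα
  intro It Ix AA Pα η
  have hAAdef : AA = (1 / (Δt : ℂ)) •
      (((1 : Matrix (Fin (n+1)) (Fin (n+1)) ℂ) - downShift (n+1)) ⊗ₖ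
        (1 : Matrix (Fin Nx) (Fin Nx) ℂ)) +
      (1 : Matrix (Fin (n+1)) (Fin (n+1)) ℂ) ⊗ₖ A := rfl
  have hPαdef : Pα = (1 / (Δt : ℂ)) •
      (((1 : Matrix (Fin (n+1)) (Fin (n+1)) ℂ) - downShiftAlpha (n+1) (α : ℂ)) ⊗ₖ
        (1 : Matrix (Fin Nx) (Fin Nx) ℂ)) +
      (1 : Matrix (Fin (n+1)) (Fin (n+1)) ℂ) ⊗ₖ A := rfl
  have hηdef : η = ((1 + Δt * r) ^ (n+1))⁻¹ := rfl
  -- real scalar facts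
  set t : ℝ := (1 + Δt * r) ^ (n+1) with ht
  have h1le : (1:ℝ) ≤ 1 + Δt * r := by nlinarith
  have htge : (1:ℝ) ≤ t := one_le_pow₀ h1le
  have htpos : (0:ℝ) < t := by linarith
  have hη1 : η ≤ 1 := by
    rw [hηdef]
    exact inv_le_one_of_one_le₀ htge
  have hηt : η = t⁻¹ := hηdef
  have hηpos : 0 < η := by rw [hηt]; positivity
  have htα : 0 < t - α := by linarith
  have hbound_pos : 0 ≤ α * η / (1 - α * η) := by
    have h1 : α * η ≤ α * 1 := by nlinarith
    have h2 : 0 < 1 - α * η := by nlinarith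
    have h3 : 0 < α * η := by positivity
    positivity
  -- spectral facts about d
  have hPdet : IsUnit P.det := (Matrix.isUnit_iff_isUnit_det P).mp hP
  have hre : ∀ x, r ≤ (d x).re := by
    intro x
    apply hspec
    have hs : spectrum ℂ A = spectrum ℂ (Matrix.diagonal d) := by
      rw [hA]
      calc spectrum ℂ (P⁻¹ * Matrix.diagonal d * P)
          = spectrum ℂ (P⁻¹ * Matrix.diagonal d * (P⁻¹)⁻¹) := by
            rw [Matrix.nonsing_inv_nonsing_inv P hPdet]
        _ = spectrum ℂ (Matrix.diagonal d) :=
            spectrum_conj _ _ ((Matrix.isUnit_nonsing_inv_iff).mpr hP)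
    rw [hs, spectrum_diagonal]
    exact ⟨x, rfl⟩
  -- per-eigenvalue quantities
  set w : Fin Nx → ℂ := fun x => 1 + (Δt:ℂ) * d x with hw
  set δ : Fin Nx → ℂ := fun x => w x ^ (n+1) - (α:ℂ) with hδ
  set μ : Fin Nx → ℂ := fun x => -(α:ℂ) * (δ x)⁻¹ with hμ
  have habsw : ∀ x, 1 + Δt * r ≤ ‖w x‖ := by
    intro x
    have hrex : (w x).re = 1 + Δt * (d x).re := by
      simp [hw, Complex.add_re, Complex.mul_re]
    calc 1 + Δt * r ≤ (w x).re := by rw [hrex]; nlinarith [hre x]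
      _ ≤ ‖w x‖ := Complex.re_le_norm _
  have habsδ : ∀ x, t - α ≤ ‖δ x‖ := by
    intro x
    have h1 : ‖(α:ℂ)‖ = α := by
      rw [Complex.norm_real, Real.norm_eq_abs, abs_of_pos hα0]
    have h2 : t ≤ ‖w x ^ (n+1)‖ := by
      rw [norm_pow]
      exact pow_le_pow_left₀ (by linarith) (habsw x) _
    calc t - α ≤ ‖w x ^ (n+1)‖ - ‖(α:ℂ)‖ := by rw [h1]; linarith
      _ ≤ ‖w x ^ (n+1) - (α:ℂ)‖ := by
          have := norm_sub_norm_le (w x ^ (n+1)) ((α:ℂ))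
          simpa using this
      _ = ‖δ x‖ := rfl
  have hδ0 : ∀ x, δ x ≠ 0 := by
    intro x h
    have := habsδ x
    rw [h] at this
    simp at this
    linarith
  have hμb : ∀ x, ‖μ x‖ ≤ α * η / (1 - α * η) := by
    intro x
    have habsμ : ‖μ x‖ = α / ‖δ x‖ := by
      rw [hμ]
      simp only [norm_mul, norm_inv, norm_neg, Complex.norm_real, Real.norm_eq_abs,
        abs_of_pos hα0]
      rw [div_eq_mul_inv]
    rw [habsμ]
    have h2 : α / ‖δ x‖ ≤ α / (t - α) :=
      div_le_div_of_nonneg_left hα0.le htα (habsδ x)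
    have hαη1 : α * η < 1 := by
      nlinarith [mul_le_mul_of_nonneg_left hη1 hα0.le]
    have h3 : α / (t - α) = α * η / (1 - α * η) := by
      rw [div_eq_div_iff htα.ne' (ne_of_gt (by linarith : (0:ℝ) < 1 - α * η))]
      rw [hηt]
      field_simp
    linarith
  -- block matrices
  set Sα : Matrix (Fin (n+1)) (Fin (n+1)) ℂ := downShiftAlpha (n+1) (α:ℂ) with hSαdef
  set Bα : Fin Nx → Matrix (Fin (n+1)) (Fin (n+1)) ℂ :=
    fun x => (1/(Δt:ℂ)) • ((1 : Matrix (Fin (n+1)) (Fin (n+1)) ℂ) - downShiftAlpha (n+1) (α:ℂ))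
      + d x • 1 with hBαdef
  set Bb : Fin Nx → Matrix (Fin (n+1)) (Fin (n+1)) ℂ :=
    fun x => (1/(Δt:ℂ)) • ((1 : Matrix (Fin (n+1)) (Fin (n+1)) ℂ) - downShift (n+1))
      + d x • 1 with hBbdef
  set Mb : Fin Nx → Matrix (Fin (n+1)) (Fin (n+1)) ℂ :=
    fun x => (-(α:ℂ) * (δ x)⁻¹) • Rmat n (w x) with hMbdef
  have hΔ0 : (Δt:ℂ) ≠ 0 := Complex.ofReal_ne_zero.mpr hΔt.ne'
  have hBα_eq : ∀ x, Bα x = (1/(Δt:ℂ)) • (w x • 1 - downShiftAlpha (n+1) (α:ℂ)) := by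
    intro x
    simp only [hBαdef, hw]
    rw [smul_sub, smul_sub, smul_smul,
      (by field_simp : (1/(Δt:ℂ)) * (1 + (Δt:ℂ) * d x) = 1/(Δt:ℂ) + d x), add_smul]
    abel
  have hδval : ∀ x, w x ^ (n+1) - (α:ℂ) = δ x := fun x => rfl
  have hBαu : ∀ x, IsUnit (Bα x) := by
    intro x
    have hmul : Bα x * (((Δt:ℂ) * (δ x)⁻¹) • Gmat n (w x) (α:ℂ)) = 1 := by
      rw [hBα_eq x, Matrix.smul_mul, Matrix.mul_smul, key1, smul_smul, smul_smul, hδval x]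
      rw [(by field_simp [hδ0 x] : (1/(Δt:ℂ)) * ((Δt:ℂ) * (δ x)⁻¹) * δ x = 1), one_smul]
    have hdet := congrArg Matrix.det hmul
    rw [Matrix.det_mul, Matrix.det_one] at hdet
    exact (Matrix.isUnit_iff_isUnit_det _).mpr (IsUnit.of_mul_eq_one _ hdet)
  have hC1 : ∀ x, Bα x * Mb x = Bα x - Bb x := by
    intro x
    have lhs : Bα x * Mb x = ((-(α:ℂ))/(Δt:ℂ)) • Emat n := by
      simp only [hMbdef]
      rw [hBα_eq x, Matrix.smul_mul, Matrix.mul_smul, key2, smul_smul, smul_smul, hδval x]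
      congr 1
      field_simp [hδ0 x]
    have rhs : Bα x - Bb x = ((-(α:ℂ))/(Δt:ℂ)) • Emat n := by
      simp only [hBαdef, hBbdef]
      have h1 : (1/(Δt:ℂ)) • ((1 : Matrix (Fin (n+1)) (Fin (n+1)) ℂ) - downShiftAlpha (n+1) (α:ℂ)) + d x • 1
          - ((1/(Δt:ℂ)) • ((1 : Matrix (Fin (n+1)) (Fin (n+1)) ℂ) - downShift (n+1)) + d x • 1)
          = (1/(Δt:ℂ)) • (downShift (n+1) - downShiftAlpha (n+1) (α:ℂ)) := by
        rw [smul_sub, smul_sub, smul_sub]; abel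
      rw [h1, sub_eq n (α:ℂ), smul_neg, ← neg_smul, smul_smul]
      congr 1
      ring
    rw [lhs, rhs]
  have hC3 : ∀ x, Mb x * Mb x = μ x • Mb x := by
    intro x
    simp only [hMbdef, hμ]
    rw [Matrix.smul_mul, Matrix.mul_smul, key3, smul_smul]
  -- Kronecker conjugation
  set Q : Matrix (Fin (n+1) × Fin Nx) (Fin (n+1) × Fin Nx) ℂ :=
    (1 : Matrix (Fin (n+1)) (Fin (n+1)) ℂ) ⊗ₖ P with hQdef
  set Q' : Matrix (Fin (n+1) × Fin Nx) (Fin (n+1) × Fin Nx) ℂ :=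
    (1 : Matrix (Fin (n+1)) (Fin (n+1)) ℂ) ⊗ₖ P⁻¹ with hQ'def
  have hQQ' : Q * Q' = 1 := by
    rw [hQdef, hQ'def, ← Matrix.mul_kronecker_mul, Matrix.one_mul,
      Matrix.mul_nonsing_inv P hPdet, Matrix.one_kronecker_one]
  have hQ'Q : Q' * Q = 1 := by
    rw [hQdef, hQ'def, ← Matrix.mul_kronecker_mul, Matrix.one_mul,
      Matrix.nonsing_inv_mul P hPdet, Matrix.one_kronecker_one]
  have hQu : IsUnit Q := by
    have h := congrArg Matrix.det hQQ'
    rw [Matrix.det_mul, Matrix.det_one] at h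
    exact (Matrix.isUnit_iff_isUnit_det _).mpr (IsUnit.of_mul_eq_one _ h)
  have hQ'u : IsUnit Q' := by
    have h := congrArg Matrix.det hQ'Q
    rw [Matrix.det_mul, Matrix.det_one] at h
    exact (Matrix.isUnit_iff_isUnit_det _).mpr (IsUnit.of_mul_eq_one _ h)
  have hPAP : P * A * P⁻¹ = Matrix.diagonal d := by
    have h1 : P * (P⁻¹ * Matrix.diagonal d * P) * P⁻¹
        = (P * P⁻¹) * Matrix.diagonal d * (P * P⁻¹) := by
      simp only [Matrix.mul_assoc]
    rw [hA, h1, Matrix.mul_nonsing_inv P hPdet, Matrix.one_mul, Matrix.mul_one]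
  have hconjP : Q * Pα * Q' = Matrix.blockDiagonal Bα := by
    rw [hPαdef, hQdef, hQ'def]
    rw [Matrix.mul_add, Matrix.add_mul, Matrix.mul_smul, Matrix.smul_mul]
    rw [← Matrix.mul_kronecker_mul, ← Matrix.mul_kronecker_mul, ← Matrix.mul_kronecker_mul,
      ← Matrix.mul_kronecker_mul]
    simp only [Matrix.one_mul, Matrix.mul_one]
    rw [Matrix.mul_nonsing_inv P hPdet, hPAP, ← Matrix.smul_kronecker, kron_decomp]
  have hconjA : Q * AA * Q' = Matrix.blockDiagonal Bb := by
    rw [hAAdef, hQdef, hQ'def]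
    rw [Matrix.mul_add, Matrix.add_mul, Matrix.mul_smul, Matrix.smul_mul]
    rw [← Matrix.mul_kronecker_mul, ← Matrix.mul_kronecker_mul, ← Matrix.mul_kronecker_mul,
      ← Matrix.mul_kronecker_mul]
    simp only [Matrix.one_mul, Matrix.mul_one]
    rw [Matrix.mul_nonsing_inv P hPdet, hPAP, ← Matrix.smul_kronecker, kron_decomp]
  have hPαrep : Pα = Q' * Matrix.blockDiagonal Bα * Q := by
    have h : Q' * (Q * Pα * Q') * Q = Pα := by
      calc Q' * (Q * Pα * Q') * Q = (Q' * Q) * Pα * (Q' * Q) := by noncomm_ring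
        _ = Pα := by rw [hQ'Q, Matrix.one_mul, Matrix.mul_one]
    rw [← hconjP]
    exact h.symm
  have hAArep : AA = Q' * Matrix.blockDiagonal Bb * Q := by
    have h : Q' * (Q * AA * Q') * Q = AA := by
      calc Q' * (Q * AA * Q') * Q = (Q' * Q) * AA * (Q' * Q) := by noncomm_ring
        _ = AA := by rw [hQ'Q, Matrix.one_mul, Matrix.mul_one]
    rw [← hconjA]
    exact h.symm
  have hBDu : IsUnit (Matrix.blockDiagonal Bα) := isUnit_blockDiagonal _ hBαu
  have hPαu : IsUnit Pα := by
    rw [hPαrep]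
    exact (hQ'u.mul hBDu).mul hQu
  refine ⟨hη1, hPαu, ?_⟩
  have hPαdet2 : IsUnit Pα.det := (Matrix.isUnit_iff_isUnit_det _).mp hPαu
  have hstep : Pα * (Q' * Matrix.blockDiagonal Mb * Q) = Pα - AA := by
    conv_lhs => rw [hPαrep]
    conv_rhs => rw [hPαrep, hAArep]
    have hmid1 : Q * (Q' * Matrix.blockDiagonal Mb * Q) = Matrix.blockDiagonal Mb * Q := by
      calc Q * (Q' * Matrix.blockDiagonal Mb * Q)
          = (Q * Q') * (Matrix.blockDiagonal Mb * Q) := by noncomm_ring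
        _ = Matrix.blockDiagonal Mb * Q := by rw [hQQ', Matrix.one_mul]
    calc (Q' * Matrix.blockDiagonal Bα * Q) * (Q' * Matrix.blockDiagonal Mb * Q)
        = (Q' * Matrix.blockDiagonal Bα) * (Q * (Q' * Matrix.blockDiagonal Mb * Q)) := by
          noncomm_ring
      _ = (Q' * Matrix.blockDiagonal Bα) * (Matrix.blockDiagonal Mb * Q) := by rw [hmid1]
      _ = Q' * (Matrix.blockDiagonal Bα * Matrix.blockDiagonal Mb) * Q := by noncomm_ring
      _ = Q' * Matrix.blockDiagonal Bα * Q - Q' * Matrix.blockDiagonal Bb * Q := by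
          rw [← Matrix.blockDiagonal_mul]
          have h2 : (fun x => Bα x * Mb x) = Bα - Bb := funext hC1
          rw [h2, Matrix.blockDiagonal_sub, Matrix.mul_sub, Matrix.sub_mul]
  have hJ : (1 : Matrix (Fin (n+1) × Fin Nx) (Fin (n+1) × Fin Nx) ℂ) - Pα⁻¹ * AA
      = Q' * Matrix.blockDiagonal Mb * Q := by
    have h := congrArg (fun X => Pα⁻¹ * X) hstep
    rw [← Matrix.mul_assoc, Matrix.nonsing_inv_mul Pα hPαdet2, Matrix.one_mul] at h
    rw [Matrix.mul_sub, Matrix.nonsing_inv_mul Pα hPαdet2] at h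
    exact h.symm
  intro z hz
  rw [hJ] at hz
  have hq : Q = Q'⁻¹ := (Matrix.inv_eq_right_inv hQ'Q).symm
  rw [hq, spectrum_conj Q' _ hQ'u] at hz
  obtain ⟨x, hx⟩ := spectrum_blockDiagonal_subset _ _ hz
  rcases quad_spectrum (Mb x) (μ x) z (hC3 x) hx with h0 | hμe
  · rw [h0]
    simpa using hbound_pos
  · rw [hμe]
    exact hμb x
end

section
/- Let m, N_t ≥ 1 and α ∈ (0,1). Let P ∈ ℂ^{m×m} be invertible and A = P^{-1} D_A P with D_A = diag(λ_1,…,λ_m). Let r_1,…,r_m ∈ ℂ be the stability values of a one-step time integrator at the eigenvalues (r_i = 𝓡(Δt λ_i)), and assume the stability condition |r_i| ≤ 1 for all i. Set R_A := P^{-1} diag(r_1,…,r_m) P, let 𝐀 = I_{N_t} ⊗ I_m + S ⊗ R_A be the all-at-once matrix of the one-step scheme U_{n+1} + R_A U_n = F̃_n, and let P_α = I_{N_t} ⊗ I_m + S_α ⊗ R_A be its α-circulant approximation. Then P_α is invertible and for every vector e ∈ ℂ^{N_t·m}: ‖(I_{N_t} ⊗ P)(I − P_α^{-1}𝐀)e‖_∞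 ≤ (α/(1−α))·‖(I_{N_t} ⊗ P)e‖_∞. Consequently, the errors err^k = u^k − u of the stationary iteration P_α u^{k+1} = (P_α − 𝐀)u^k + b satisfy ‖(I_{N_t} ⊗ P) err^{k+1}‖_∞ ≤ (α/(1−α))·‖(I_{N_t} ⊗ P) err^k‖_∞ for all k, so the iteration converges linearly whenever α ∈ (0,1/2). -/
open Matrix
open scoped Kronecker

/-- Entries of the explicit inverse of `I + r·S_α` (scaled by `c⁻¹ = (1-α(-r)^{N})⁻¹`). -/
noncomputable def bEnt (Nt : ℕ) (α rr : ℂ) (n k : Fin Nt) : ℂ :=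
  (1 - α * (-rr) ^ Nt)⁻¹ * (-rr) ^ (((n : ℕ) + Nt - (k : ℕ)) % Nt) *
    (if (k : ℕ) ≤ (n : ℕ) then 1 else α)

lemma shiftAlpha_row_sum {Nt : ℕ} (hNt : 1 ≤ Nt) (α : ℂ) (g : Fin Nt → ℂ) (n : Fin Nt) :
    ∑ l, downShiftAlpha Nt α n l * g l =
      if (n : ℕ) = 0 then α * g ⟨Nt - 1, by omega⟩
      else g ⟨(n : ℕ) - 1, by omega⟩ := by
  have hn1 : (n : ℕ) < Nt := n.isLt
  simp only [downShiftAlpha, downShift, Matrix.add_apply, Matrix.smul_apply, Matrix.of_apply,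
    smul_eq_mul, add_mul, Finset.sum_add_distrib]
  have h1 : ∑ l : Fin Nt, (if (n : ℕ) = (l : ℕ) + 1 then (1 : ℂ) else 0) * g l
      = if (n : ℕ) = 0 then 0 else g ⟨(n : ℕ) - 1, by omega⟩ := by
    by_cases hn : (n : ℕ) = 0
    · rw [if_pos hn]
      apply Finset.sum_eq_zero
      intro l _
      rw [if_neg (by omega), zero_mul]
    · rw [if_neg hn]
      rw [Finset.sum_eq_single (⟨(n : ℕ) - 1, by omega⟩ : Fin Nt)]
      · rw [if_pos (by simp only [Fin.val_mk]; omega), one_mul]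
      · intro l _ hl
        rw [if_neg, zero_mul]
        intro h
        exact hl (Fin.ext (by simp only [Fin.val_mk]; omega))
      · intro h; exact absurd (Finset.mem_univ _) h
  have h2 : ∑ l : Fin Nt, α * (if (n : ℕ) = 0 ∧ (l : ℕ) + 1 = Nt then (1 : ℂ) else 0) * g l
      = if (n : ℕ) = 0 then α * g ⟨Nt - 1, by omega⟩ else 0 := by
    by_cases hn : (n : ℕ) = 0
    · rw [if_pos hn]
      rw [Finset.sum_eq_single (⟨Nt - 1, by omega⟩ : Fin Nt)]
      · rw [if_pos ⟨hn, by simp only [Fin.val_mk]; omega⟩, mul_one]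
      · intro l _ hl
        rw [if_neg, mul_zero, zero_mul]
        rintro ⟨-, h⟩
        exact hl (Fin.ext (by simp only [Fin.val_mk]; omega))
      · intro h; exact absurd (Finset.mem_univ _) h
    · rw [if_neg hn]
      apply Finset.sum_eq_zero
      intro l _
      rw [if_neg (by tauto), mul_zero, zero_mul]
  rw [h1, h2]
  by_cases hn : (n : ℕ) = 0 <;> simp [hn]

lemma bEnt_key {Nt : ℕ} (hNt : 1 ≤ Nt) (α rr : ℂ) (hc : 1 - α * (-rr) ^ Nt ≠ 0)
    (n k : Fin Nt) :
    bEnt Nt α rr n k + rr * ∑ l, downShiftAlpha Nt α n l * bEnt Nt α rr l k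
      = if n = k then 1 else 0 := by
  have hnlt : (n : ℕ) < Nt := n.isLt
  have hklt : (k : ℕ) < Nt := k.isLt
  rw [shiftAlpha_row_sum hNt]
  have hpow : (-rr) ^ Nt = -rr * (-rr) ^ (Nt - 1) := by
    rw [← pow_succ']; congr 1; omega
  by_cases hn : (n : ℕ) = 0
  · rw [if_pos hn]
    by_cases hk : (k : ℕ) = 0
    · rw [if_pos (Fin.ext (by omega))]
      unfold bEnt
      rw [if_pos (by omega), if_pos (by simp only [Fin.val_mk]; omega)]
      have e1 : ((n : ℕ) + Nt - (k : ℕ)) % Nt = 0 := by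
        have : (n : ℕ) + Nt - (k : ℕ) = Nt := by omega
        rw [this, Nat.mod_self]
      have e2 : ((⟨Nt - 1, by omega⟩ : Fin Nt) : ℕ) + Nt - (k : ℕ) = (Nt - 1) + Nt := by
        simp only [Fin.val_mk]; omega
      rw [e1, e2, Nat.add_mod_right, Nat.mod_eq_of_lt (by omega)]
      field_simp
      rw [hpow] at hc ⊢
      field_simp
      ring
    · rw [if_neg (by intro h; exact hk (h ▸ hn))]
      unfold bEnt
      rw [if_neg (by omega), if_pos (by simp only [Fin.val_mk]; omega)]
      have e1 : ((n : ℕ) + Nt - (k : ℕ)) % Nt = Nt - (k : ℕ) := by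
        rw [Nat.mod_eq_of_lt (by omega)]; omega
      have e2 : (((⟨Nt - 1, by omega⟩ : Fin Nt) : ℕ) + Nt - (k : ℕ)) % Nt
          = Nt - 1 - (k : ℕ) := by
        simp only [Fin.val_mk]
        have : Nt - 1 + Nt - (k : ℕ) = (Nt - 1 - (k : ℕ)) + Nt := by omega
        rw [this, Nat.add_mod_right, Nat.mod_eq_of_lt (by omega)]
      rw [e1, e2]
      have hpow2 : (-rr) ^ (Nt - (k : ℕ)) = -rr * (-rr) ^ (Nt - 1 - (k : ℕ)) := by
        rw [← pow_succ']; congr 1; omega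
      rw [hpow2]; ring
  · rw [if_neg hn]
    by_cases hk : (n : ℕ) = (k : ℕ)
    · rw [if_pos (Fin.ext hk)]
      unfold bEnt
      rw [if_pos (by omega), if_neg (by simp only [Fin.val_mk]; omega)]
      have e1 : ((n : ℕ) + Nt - (k : ℕ)) % Nt = 0 := by
        have : (n : ℕ) + Nt - (k : ℕ) = Nt := by omega
        rw [this, Nat.mod_self]
      have e2 : (((⟨(n : ℕ) - 1, by omega⟩ : Fin Nt) : ℕ) + Nt - (k : ℕ)) % Nt = Nt - 1 := by
        simp only [Fin.val_mk]
        rw [Nat.mod_eq_of_lt (by omega)]; omega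
      rw [e1, e2]
      field_simp
      rw [hpow] at hc ⊢
      field_simp
      ring
    · rw [if_neg (fun h => hk (by rw [h]))]
      unfold bEnt
      simp only [Fin.val_mk]
      have hweq : ((if (k : ℕ) ≤ (n : ℕ) then (1 : ℂ) else α))
          = (if (k : ℕ) ≤ (n : ℕ) - 1 then (1 : ℂ) else α) := by
        by_cases h : (k : ℕ) ≤ (n : ℕ) - 1
        · rw [if_pos h, if_pos (by omega)]
        · rw [if_neg h, if_neg (by omega)]
      have e12 : ((n : ℕ) + Nt - (k : ℕ)) % Nt = ((n : ℕ) - 1 + Nt - (k : ℕ)) % Nt + 1 := by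
        rcases le_or_gt (k : ℕ) ((n : ℕ) - 1) with h | h
        · have a1 : (n : ℕ) + Nt - (k : ℕ) = ((n : ℕ) - (k : ℕ)) + Nt := by omega
          have a2 : (n : ℕ) - 1 + Nt - (k : ℕ) = ((n : ℕ) - 1 - (k : ℕ)) + Nt := by omega
          rw [a1, a2, Nat.add_mod_right, Nat.add_mod_right,
            Nat.mod_eq_of_lt (by omega), Nat.mod_eq_of_lt (by omega)]
          omega
        · rw [Nat.mod_eq_of_lt (by omega), Nat.mod_eq_of_lt (by omega)]
          omega
      rw [e12, hweq, pow_succ']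
      ring

/-- Unified ParaDiag-II convergence for one-step time integrators (stable in the sense
`|𝓡(Δtλᵢ)| ≤ 1`): the α-circulant approximation `P_α` of the one-step all-at-once
matrix `𝐀 = I ⊗ I + S ⊗ R_A` is invertible, the contraction estimate
`‖(I⊗P)(I - P_α⁻¹𝐀)e‖_∞ ≤ (α/(1-α))‖(I⊗P)e‖_∞` holds for every vector `e`, and the
errors of the stationary iteration `P_α u^{k+1} = (P_α - 𝐀)u^k + b` contract by the
factor `α/(1-α)`; note `∀ e : Fin Nt × Fin m → ℂ, ‖e‖ = max-norm` by the Pi instance. -/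
theorem paraDiagII_oneStep_unified (m Nt : ℕ) (hm : 1 ≤ m) (hNt : 1 ≤ Nt)
    (α : ℝ) (hα : α ∈ Set.Ioo (0 : ℝ) 1)
    (P : Matrix (Fin m) (Fin m) ℂ) (hP : IsUnit P)
    (lam : Fin m → ℂ) (A : Matrix (Fin m) (Fin m) ℂ)
    (hA : A = P⁻¹ * Matrix.diagonal lam * P)
    (r : Fin m → ℂ) (hstab : ∀ i, ‖r i‖ ≤ 1) :
    let RA := P⁻¹ * Matrix.diagonal r * P
    let Im : Matrix (Fin m) (Fin m) ℂ := 1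
    let It : Matrix (Fin Nt) (Fin Nt) ℂ := 1
    let AA := It ⊗ₖ Im + downShift Nt ⊗ₖ RA
    let Pα := It ⊗ₖ Im + downShiftAlpha Nt (α : ℂ) ⊗ₖ RA
    IsUnit Pα ∧
      (∀ e : Fin Nt × Fin m → ℂ,
        ‖(It ⊗ₖ P).mulVec (((1 : Matrix (Fin Nt × Fin m) (Fin Nt × Fin m) ℂ)
            - Pα⁻¹ * AA).mulVec e)‖ ≤ (α / (1 - α)) * ‖(It ⊗ₖ P).mulVec e‖) ∧
      (∀ (u b : Fin Nt × Fin m → ℂ) (useq : ℕ → Fin Nt × Fin m → ℂ),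
        AA.mulVec u = b →
        (∀ k, Pα.mulVec (useq (k + 1)) = (Pα - AA).mulVec (useq k) + b) →
        ∀ k, ‖(It ⊗ₖ P).mulVec (useq (k + 1) - u)‖ ≤
          (α / (1 - α)) * ‖(It ⊗ₖ P).mulVec (useq k - u)‖) := by
  intro RA Im It AA Pα
  obtain ⟨hα0, hα1⟩ := hα
  have hIt : It = 1 := rfl
  have hIm : Im = 1 := rfl
  set αc : ℂ := (α : ℂ) with hαc
  have hRA : RA = P⁻¹ * Matrix.diagonal r * P := rfl
  set D : Matrix (Fin m) (Fin m) ℂ := Matrix.diagonal r with hD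
  have hPdet : IsUnit P.det := (Matrix.isUnit_iff_isUnit_det P).mp hP
  have hPP : P * P⁻¹ = 1 := Matrix.mul_nonsing_inv P hPdet
  have hP'P : P⁻¹ * P = 1 := Matrix.nonsing_inv_mul P hPdet
  have hPRA : P * RA = D * P := by
    rw [hRA]
    simp only [← Matrix.mul_assoc]
    rw [hPP, Matrix.one_mul]
  set Q : Matrix (Fin Nt × Fin m) (Fin Nt × Fin m) ℂ := It ⊗ₖ P with hQ
  set Q' : Matrix (Fin Nt × Fin m) (Fin Nt × Fin m) ℂ := It ⊗ₖ P⁻¹ with hQ'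
  have hQQ' : Q * Q' = 1 := by
    rw [hQ, hQ', ← Matrix.mul_kronecker_mul, hPP, hIt, Matrix.one_mul,
      Matrix.one_kronecker_one]
  have hQ'Q : Q' * Q = 1 := by
    rw [hQ, hQ', ← Matrix.mul_kronecker_mul, hP'P, hIt, Matrix.one_mul,
      Matrix.one_kronecker_one]
  set Sα := downShiftAlpha Nt αc with hSα
  set Pα' : Matrix (Fin Nt × Fin m) (Fin Nt × Fin m) ℂ := 1 + Sα ⊗ₖ D with hPα'
  have hPαdef : Pα = It ⊗ₖ Im + Sα ⊗ₖ RA := rfl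
  have hPRAP : P * RA * P⁻¹ = D := by
    rw [hPRA, Matrix.mul_assoc, hPP, Matrix.mul_one]
  have hconj : Q * Pα * Q' = Pα' := by
    rw [hPαdef, Matrix.mul_add, Matrix.add_mul, hQ, hQ']
    simp only [← Matrix.mul_kronecker_mul, hIt, hIm, Matrix.one_mul, Matrix.mul_one]
    rw [hPP, hPRAP, Matrix.one_kronecker_one, hPα']
  -- nonvanishing of the scalar denominators
  have hrn : ∀ i, ‖r i‖ ≤ 1 := fun i => by exact hstab i
  have hαn : ‖αc‖ = α := by
    rw [hαc, Complex.norm_real, Real.norm_eq_abs, abs_of_pos hα0]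
  have hznorm : ∀ i, ‖αc * (-(r i)) ^ Nt‖ ≤ α := by
    intro i
    rw [norm_mul, norm_pow, norm_neg, hαn]
    calc α * ‖r i‖ ^ Nt ≤ α * 1 :=
          mul_le_mul_of_nonneg_left (pow_le_one₀ (norm_nonneg _) (hrn i)) hα0.le
      _ = α := mul_one α
  have hcne : ∀ i, (1 : ℂ) - αc * (-(r i)) ^ Nt ≠ 0 := by
    intro i h
    rw [sub_eq_zero] at h
    have h2 := hznorm i
    rw [← h, norm_one] at h2
    linarith
  have hcnorm : ∀ i, 1 - α ≤ ‖(1 : ℂ) - αc * (-(r i)) ^ Nt‖ := by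
    intro i
    calc 1 - α ≤ ‖(1 : ℂ)‖ - ‖αc * (-(r i)) ^ Nt‖ := by
          rw [norm_one]; linarith [hznorm i]
      _ ≤ ‖(1 : ℂ) - αc * (-(r i)) ^ Nt‖ := norm_sub_norm_le _ _
  -- the explicit inverse of Pα'
  set B : Matrix (Fin Nt × Fin m) (Fin Nt × Fin m) ℂ :=
    Matrix.of (fun p q : Fin Nt × Fin m =>
      if p.2 = q.2 then bEnt Nt αc (r p.2) p.1 q.1 else 0) with hB
  have hKey : Pα' * B = 1 := by
    ext ⟨n, i⟩ ⟨k, j⟩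
    rw [Matrix.mul_apply, Fintype.sum_prod_type]
    by_cases hij : i = j
    · subst hij
      have hstep : ∀ l : Fin Nt, ∑ h : Fin m, Pα' (n, i) (l, h) * B (l, h) (k, i)
          = ((if n = l then (1 : ℂ) else 0) + Sα n l * r i) * bEnt Nt αc (r i) l k := by
        intro l
        rw [Finset.sum_eq_single i]
        · rw [hPα', hB]
          simp only [Matrix.add_apply, Matrix.one_apply, Matrix.kroneckerMap_apply,
            Matrix.of_apply, Prod.mk.injEq, and_true, if_true]
          rw [hD, Matrix.diagonal_apply_eq]
        · intro h _ hh
          have hz : B (l, h) (k, i) = 0 := by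
            rw [hB]; simp only [Matrix.of_apply]; exact if_neg hh
          rw [hz, mul_zero]
        · intro hh; exact absurd (Finset.mem_univ _) hh
      simp only [hstep]
      have hsum : ∑ l, ((if n = l then (1 : ℂ) else 0) + Sα n l * r i) * bEnt Nt αc (r i) l k
          = bEnt Nt αc (r i) n k + r i * ∑ l, Sα n l * bEnt Nt αc (r i) l k := by
        simp only [add_mul, ite_mul, one_mul, zero_mul, Finset.sum_add_distrib,
          Finset.sum_ite_eq, Finset.mem_univ, if_pos]
        rw [Finset.mul_sum]
        congr 1
        exact Finset.sum_congr rfl fun l _ => by ring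
      rw [hsum, hSα, bEnt_key hNt αc (r i) (hcne i) n k, Matrix.one_apply]
      by_cases hnk : n = k
      · rw [if_pos hnk, if_pos (by rw [hnk])]
      · rw [if_neg hnk, if_neg (by intro h; exact hnk (congrArg Prod.fst h))]
    · have hz : ∀ p : Fin Nt × Fin m, Pα' (n, i) p * B p (k, j) = 0 := by
        rintro ⟨l, h⟩
        by_cases hhj : h = j
        · subst hhj
          have h1 : Pα' (n, i) (l, h) = 0 := by
            rw [hPα']
            simp only [Matrix.add_apply, Matrix.one_apply, Matrix.kroneckerMap_apply]
            rw [hD, Matrix.diagonal_apply_ne _ hij, mul_zero,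
              if_neg (fun he => hij (congrArg Prod.snd he)), add_zero]
          rw [h1, zero_mul]
        · have h2 : B (l, h) (k, j) = 0 := by
            rw [hB]; simp only [Matrix.of_apply]; exact if_neg hhj
          rw [h2, mul_zero]
      simp only [hz, Finset.sum_const_zero]
      rw [Matrix.one_apply, if_neg (fun he => hij (congrArg Prod.snd he))]
  have hPαQ : Pα = Q' * Pα' * Q := by
    rw [← hconj]
    simp only [← Matrix.mul_assoc]
    rw [hQ'Q, Matrix.one_mul, Matrix.mul_assoc, hQ'Q, Matrix.mul_one]
  have hRight : Pα * (Q' * B * Q) = 1 := by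
    rw [hPαQ]
    simp only [← Matrix.mul_assoc]
    rw [Matrix.mul_assoc (Q' * Pα') Q Q', hQQ', Matrix.mul_one,
      Matrix.mul_assoc Q' Pα' B, hKey, Matrix.mul_one, hQ'Q]
  have hUnit : IsUnit Pα := (Matrix.isUnit_iff_isUnit_det Pα).mpr (Matrix.isUnit_det_of_right_inverse hRight)
  have hPαinv : Pα⁻¹ = Q' * B * Q := Matrix.inv_eq_right_inv hRight
  have hdetPα : IsUnit Pα.det := (Matrix.isUnit_iff_isUnit_det Pα).mp hUnit
  -- the rank-one difference
  set E : Matrix (Fin Nt) (Fin Nt) ℂ :=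
    Matrix.of (fun j k : Fin Nt => if (j : ℕ) = 0 ∧ (k : ℕ) + 1 = Nt then (1 : ℂ) else 0)
    with hE
  have hSαE : Sα = downShift Nt + αc • E := rfl
  have hAAdef : AA = It ⊗ₖ Im + downShift Nt ⊗ₖ RA := rfl
  have hdiff : Pα - AA = αc • (E ⊗ₖ RA) := by
    rw [hPαdef, hAAdef, hSαE, Matrix.add_kronecker, Matrix.smul_kronecker]
    abel
  have hQE : Q * (E ⊗ₖ RA) = (E ⊗ₖ D) * Q := by
    rw [hQ, ← Matrix.mul_kronecker_mul, ← Matrix.mul_kronecker_mul, hIt]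
    rw [Matrix.one_mul, Matrix.mul_one, hPRA]
  have hfact : (1 : Matrix (Fin Nt × Fin m) (Fin Nt × Fin m) ℂ) - Pα⁻¹ * AA
      = Pα⁻¹ * (Pα - AA) := by
    rw [Matrix.mul_sub, Matrix.nonsing_inv_mul Pα hdetPα]
  set M : Matrix (Fin Nt × Fin m) (Fin Nt × Fin m) ℂ := B * (αc • (E ⊗ₖ D)) with hM
  have hMain : Q * ((1 : Matrix (Fin Nt × Fin m) (Fin Nt × Fin m) ℂ) - Pα⁻¹ * AA)
      = M * Q := by
    rw [hfact, hPαinv, hdiff, hM]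
    simp only [← Matrix.mul_assoc]
    rw [hQQ', Matrix.one_mul]
    simp only [Matrix.mul_smul, Matrix.smul_mul]
    congr 1
    rw [Matrix.mul_assoc, hQE, ← Matrix.mul_assoc]
  -- entrywise formula for M.mulVec
  have hMv : ∀ (f : Fin Nt × Fin m → ℂ) (p : Fin Nt × Fin m),
      M.mulVec f p = bEnt Nt αc (r p.2) p.1 ⟨0, by omega⟩ *
        ((αc * r p.2) * f (⟨Nt - 1, by omega⟩, p.2)) := by
    intro f p
    obtain ⟨n, i⟩ := p
    rw [hM, ← Matrix.mulVec_mulVec]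
    set g := (αc • (E ⊗ₖ D)).mulVec f with hg
    have hgval : ∀ q : Fin Nt × Fin m,
        g q = if (q.1 : ℕ) = 0 then αc * r q.2 * f (⟨Nt - 1, by omega⟩, q.2) else 0 := by
      rintro ⟨l, h⟩
      rw [hg]
      simp only [Matrix.mulVec, dotProduct, Matrix.smul_apply, Matrix.kroneckerMap_apply,
        smul_eq_mul]
      rw [Fintype.sum_prod_type]
      have hinner : ∀ k : Fin Nt, ∑ j : Fin m, αc * (E l k * D h j) * f (k, j)
          = αc * E l k * (r h * f (k, h)) := by
        intro k
        rw [Finset.sum_eq_single h]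
        · rw [hD, Matrix.diagonal_apply_eq]; ring
        · intro j _ hj
          rw [hD, Matrix.diagonal_apply_ne _ (Ne.symm hj)]; ring
        · intro hh; exact absurd (Finset.mem_univ _) hh
      refine (Finset.sum_congr rfl fun k _ => hinner k).trans ?_
      rw [Finset.sum_eq_single (⟨Nt - 1, by omega⟩ : Fin Nt)]
      · by_cases hl : (l : ℕ) = 0
        · rw [if_pos hl]
          have hE1 : E l ⟨Nt - 1, by omega⟩ = 1 := by
            rw [hE]; exact if_pos ⟨hl, by simp only [Fin.val_mk]; omega⟩
          rw [hE1]; ring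
        · rw [if_neg hl]
          have hE0 : E l ⟨Nt - 1, by omega⟩ = 0 := by
            rw [hE]; exact if_neg (by tauto)
          rw [hE0]; ring
      · intro k _ hk
        have hE0 : E l k = 0 := by
          rw [hE]
          refine if_neg ?_
          rintro ⟨-, h2⟩
          exact hk (Fin.ext (by simp only [Fin.val_mk]; omega))
        rw [hE0]; ring
      · intro hh; exact absurd (Finset.mem_univ _) hh
    simp only [Matrix.mulVec, dotProduct]
    rw [Fintype.sum_prod_type]
    have hinner2 : ∀ l : Fin Nt, ∑ h : Fin m, B (n, i) (l, h) * g (l, h)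
        = bEnt Nt αc (r i) n l * g (l, i) := by
      intro l
      rw [Finset.sum_eq_single i]
      · simp [hB]
      · intro h _ hh
        have hz : B (n, i) (l, h) = 0 := by
          rw [hB]; simp only [Matrix.of_apply]; exact if_neg (fun he => hh he.symm)
        rw [hz, zero_mul]
      · intro hh; exact absurd (Finset.mem_univ _) hh
    simp only [hinner2]
    rw [Finset.sum_eq_single (⟨0, by omega⟩ : Fin Nt)]
    · rw [hgval (⟨0, by omega⟩, i)]
      simp only [Fin.val_mk, if_true]
    · intro l _ hl
      rw [hgval (l, i), if_neg (fun h0 => hl (Fin.ext h0)), mul_zero]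
    · intro hh; exact absurd (Finset.mem_univ _) hh
  -- the contraction estimate for M
  have hcoef : 0 ≤ α / (1 - α) := div_nonneg hα0.le (by linarith)
  have hcontract : ∀ (i : Fin m) (n : Fin Nt),
      ‖bEnt Nt αc (r i) n ⟨0, by omega⟩ * (αc * r i)‖ ≤ α / (1 - α) := by
    intro i n
    have h0 : bEnt Nt αc (r i) n ⟨0, by omega⟩
        = (1 - αc * (-(r i)) ^ Nt)⁻¹ * (-(r i)) ^ (n : ℕ) := by
      unfold bEnt
      rw [if_pos (by simp only [Fin.val_mk]; omega), mul_one]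
      congr 2
      simp only [Fin.val_mk, Nat.sub_zero]
      rw [Nat.add_mod_right, Nat.mod_eq_of_lt n.isLt]
    rw [h0, norm_mul, norm_mul, norm_inv, norm_pow, norm_neg, norm_mul, hαn]
    have hc1 : (0 : ℝ) < 1 - α := by linarith
    have hcb := hcnorm i
    have hrpow : ‖r i‖ ^ (n : ℕ) * ‖r i‖ ≤ 1 := by
      calc ‖r i‖ ^ (n : ℕ) * ‖r i‖ = ‖r i‖ ^ ((n : ℕ) + 1) := (pow_succ _ _).symm
        _ ≤ 1 := pow_le_one₀ (norm_nonneg _) (hrn i)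
    calc ‖(1 - αc * (-(r i)) ^ Nt)‖⁻¹ * ‖r i‖ ^ (n : ℕ) * (α * ‖r i‖)
        = (‖r i‖ ^ (n : ℕ) * ‖r i‖) * α * ‖(1 - αc * (-(r i)) ^ Nt)‖⁻¹ := by ring
      _ ≤ 1 * α * (1 - α)⁻¹ := by
          gcongr
          repeat' first | exact hrpow | exact hcb | exact hc1 | exact hα0.le | positivity
      _ = α / (1 - α) := by rw [one_mul, div_eq_mul_inv]
  have hBound : ∀ f : Fin Nt × Fin m → ℂ, ‖M.mulVec f‖ ≤ α / (1 - α) * ‖f‖ := by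
    intro f
    rw [pi_norm_le_iff_of_nonneg (mul_nonneg hcoef (norm_nonneg f))]
    intro p
    rw [hMv f p]
    rw [show bEnt Nt αc (r p.2) p.1 ⟨0, by omega⟩ * ((αc * r p.2) * f (⟨Nt - 1, by omega⟩, p.2))
        = (bEnt Nt αc (r p.2) p.1 ⟨0, by omega⟩ * (αc * r p.2)) * f (⟨Nt - 1, by omega⟩, p.2)
        from by ring, norm_mul]
    exact mul_le_mul (hcontract p.2 p.1) (norm_le_pi_norm f _) (norm_nonneg _) hcoef
  refine ⟨hUnit, ?_, ?_⟩
  · intro e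
    rw [Matrix.mulVec_mulVec, hMain, ← Matrix.mulVec_mulVec]
    exact hBound (Q.mulVec e)
  · intro u b useq hu hiter k
    have herr : useq (k + 1) - u
        = ((1 : Matrix (Fin Nt × Fin m) (Fin Nt × Fin m) ℂ) - Pα⁻¹ * AA).mulVec
            (useq k - u) := by
      have h1 : Pα.mulVec (useq (k + 1) - u) = (Pα - AA).mulVec (useq k - u) := by
        simp only [Matrix.mulVec_sub]
        rw [hiter k, ← hu]
        simp only [Matrix.sub_mulVec]
        abel
      have h2 := congrArg (fun v => Pα⁻¹.mulVec v) h1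
      simp only [Matrix.mulVec_mulVec] at h2
      rw [Matrix.nonsing_inv_mul Pα hdetPα, Matrix.one_mulVec] at h2
      rw [hfact]
      exact h2
    rw [herr, Matrix.mulVec_mulVec, hMain, ← Matrix.mulVec_mulVec]
    exact hBound (Q.mulVec (useq k - u))
end
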